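/- arXiv:2009.00903 — 4 statements merged into one kernel-verified Lean document; each statement's English description precedes it below -/
import Mathlib

section
/- Let A be a finite alphabet equipped with a commutative and associative bilinear bracket [,] on the free vector space R^A. The quasi-shuffle product on the tensor algebra T(A), defined recursively by 1 ⊛ v = v ⊛ 1 = v and va ⊛ wb = (v ⊛ wb)a + (va ⊛ w)b + (v ⊛ w)[ab] for words v,w and letters a,b, is commutative and associative. -/
open Finsupp
open scoped Classical

noncomputable section

/-- `T(A)`: the free real vector space on words over the alphabet `A`. -/
abbrev TA (A : Type) := List A →₀ ℝ

/-- The basis word `w` viewed as an element of `T(A)`. -/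
def wordE {A : Type} (w : List A) : TA A := Finsupp.single w 1

/-- Right-concatenation of a letter, extended linearly. -/
def appLetter {A : Type} (a : A) : TA A →ₗ[ℝ] TA A :=
  Finsupp.lmapDomain ℝ ℝ (fun u => u ++ [a])

/-- Right-concatenation of a "generalized letter" `c ∈ ℝ^A`, extended bilinearly. -/
def appGen {A : Type} (c : A →₀ ℝ) (y : TA A) : TA A :=
  c.sum fun x r => r • appLetter x y

/-- A bilinear map `M` on `T(A)` is the quasi-shuffle product associated to the
bracket `br` if it satisfies `1 ⊛ v = v ⊛ 1 = v` and the recursion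
`va ⊛ wb = (v ⊛ wb)a + (va ⊛ w)b + (v ⊛ w)[ab]`. -/
def IsQuasiShuffle {A : Type} (br : A → A → (A →₀ ℝ))
    (M : TA A →ₗ[ℝ] TA A →ₗ[ℝ] TA A) : Prop :=
  (∀ x : TA A, M (wordE []) x = x) ∧ (∀ x : TA A, M x (wordE []) = x) ∧
  ∀ (v w : List A) (a b : A),
    M (wordE (v ++ [a])) (wordE (w ++ [b])) =
      appLetter a (M (wordE v) (wordE (w ++ [b]))) +
      appLetter b (M (wordE (v ++ [a])) (wordE w)) +
      appGen (br a b) (M (wordE v) (wordE w))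

/-- Bilinear extension of the bracket `br` to `ℝ^A`. -/
def brExt {A : Type} (br : A → A → (A →₀ ℝ)) (f g : A →₀ ℝ) : A →₀ ℝ :=
  f.sum fun a ra => g.sum fun b rb => (ra * rb) • br a b

namespace QSaux
variable {A : Type}

lemma appLetter_wordE (a : A) (v : List A) : appLetter a (wordE v) = wordE (v ++ [a]) := by
  simp [appLetter, wordE, Finsupp.mapDomain_single]

lemma single_eq_smul (v : List A) (r : ℝ) : (Finsupp.single v r : TA A) = r • wordE v := by
  simp [wordE, Finsupp.smul_single]

lemma appGen_zero_left (y : TA A) : appGen (0 : A →₀ ℝ) y = 0 := by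
  simp [appGen]

lemma appGen_add_left (f g : A →₀ ℝ) (y : TA A) : appGen (f + g) y = appGen f y + appGen g y :=
  Finsupp.sum_add_index' (fun a => by simp) (fun a r s => by rw [add_smul])

def appGenHom (y : TA A) : (A →₀ ℝ) →+ TA A where
  toFun c := appGen c y
  map_zero' := appGen_zero_left y
  map_add' f g := appGen_add_left f g y

lemma appGen_sum {α β : Type*} [Zero β] (f : α →₀ β) (F : α → β → (A →₀ ℝ)) (y : TA A) :
    appGen (f.sum F) y = f.sum fun a r => appGen (F a r) y :=
  map_finsuppSum (appGenHom y) f F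

lemma appGen_smul_left (r : ℝ) (f : A →₀ ℝ) (y : TA A) : appGen (r • f) y = r • appGen f y := by
  rw [appGen, Finsupp.sum_smul_index (fun a => by simp), appGen, Finsupp.smul_sum]
  simp [mul_smul]

lemma appGen_zero_right (c : A →₀ ℝ) : appGen c (0 : TA A) = 0 := by
  simp [appGen]

lemma appGen_add_right (c : A →₀ ℝ) (x y : TA A) : appGen c (x+y) = appGen c x + appGen c y := by
  simp [appGen, map_add, smul_add, Finsupp.sum_add]

lemma appGen_smul_right (c : A →₀ ℝ) (r : ℝ) (y : TA A) : appGen c (r • y) = r • appGen c y := by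
  simp only [appGen, map_smul, Finsupp.smul_sum, smul_comm r]

variable (br : A → A → (A →₀ ℝ)) (M : TA A →ₗ[ℝ] TA A →ₗ[ℝ] TA A)

lemma M_sum_left {α β : Type*} [Zero β] (f : α →₀ β) (F : α → β → TA A) (y : TA A) :
    M (f.sum F) y = f.sum fun a r => M (F a r) y := by
  rw [map_finsuppSum, LinearMap.finsupp_sum_apply]

lemma brExt_single_single (a b : A) :
    brExt br (Finsupp.single a 1) (Finsupp.single b 1) = br a b := by
  rw [brExt, Finsupp.sum_single_index (by simp), Finsupp.sum_single_index (by simp)]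
  simp

lemma brExt_sum_single (f : A →₀ ℝ) (c : A) :
    brExt br f (Finsupp.single c 1) = f.sum fun a ra => ra • br a c := by
  rw [brExt]
  exact Finsupp.sum_congr fun a _ => by
    rw [Finsupp.sum_single_index (by simp), mul_one]

lemma brExt_comm (hbr_comm : ∀ a b : A, br a b = br b a) (f g : A →₀ ℝ) :
    brExt br f g = brExt br g f := by
  rw [brExt, brExt, Finsupp.sum_comm]
  exact Finsupp.sum_congr fun b _ => Finsupp.sum_congr fun a _ => by
    rw [mul_comm, hbr_comm]

variable (hM : IsQuasiShuffle br M)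
include hM

lemma Rx (a c : A) (w : List A) (x : TA A) :
    M (appLetter a x) (wordE (w ++ [c])) =
      appLetter a (M x (wordE (w ++ [c]))) + appLetter c (M (appLetter a x) (wordE w)) +
      appGen (br a c) (M x (wordE w)) := by
  induction x using Finsupp.induction_linear with
  | zero => simp [appGen_zero_right]
  | add f g hf hg =>
      simp only [map_add, LinearMap.add_apply, hf, hg, appGen_add_right]; abel
  | single v r =>
      simp only [single_eq_smul, map_smul, LinearMap.smul_apply, appLetter_wordE,
        appGen_smul_right, hM.2.2 v w a c]
      rw [smul_add, smul_add]

lemma Rg (f : A →₀ ℝ) (c : A) (w : List A) (x : TA A) :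
    M (appGen f x) (wordE (w ++ [c])) =
      appGen f (M x (wordE (w ++ [c]))) + appLetter c (M (appGen f x) (wordE w)) +
      appGen (brExt br f (Finsupp.single c 1)) (M x (wordE w)) := by
  calc M (appGen f x) (wordE (w ++ [c]))
      = f.sum (fun a ra => ra • appLetter a (M x (wordE (w ++ [c])))
          + ra • appLetter c (M (appLetter a x) (wordE w))
          + ra • appGen (br a c) (M x (wordE w))) := by
        rw [appGen, M_sum_left]
        exact Finsupp.sum_congr fun a _ => by
          rw [map_smul, LinearMap.smul_apply, Rx br M hM a c w x, smul_add, smul_add]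
    _ = (f.sum fun a ra => ra • appLetter a (M x (wordE (w ++ [c]))))
        + (f.sum fun a ra => ra • appLetter c (M (appLetter a x) (wordE w)))
        + (f.sum fun a ra => ra • appGen (br a c) (M x (wordE w))) := by
        rw [Finsupp.sum_add, Finsupp.sum_add]
    _ = appGen f (M x (wordE (w ++ [c]))) + appLetter c (M (appGen f x) (wordE w)) +
        appGen (brExt br f (Finsupp.single c 1)) (M x (wordE w)) := by
        congr 1
        · congr 1
          rw [appGen, M_sum_left, map_finsuppSum]
          exact Finsupp.sum_congr fun a _ => by rw [map_smul, LinearMap.smul_apply, map_smul]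
        · rw [brExt_sum_single, appGen_sum]
          exact Finsupp.sum_congr fun a _ => by rw [appGen_smul_left]

lemma comm_words (hbr_comm : ∀ a b : A, br a b = br b a) :
    ∀ n (v w : List A), v.length + w.length ≤ n →
      M (wordE v) (wordE w) = M (wordE w) (wordE v) := by
  intro n
  induction n with
  | zero =>
      intro v w h
      have hv : v = [] := by
        rw [← List.length_eq_zero_iff]; omega
      subst hv; rw [hM.1, hM.2.1]
  | succ n ih =>
      intro v w hlen
      rcases List.eq_nil_or_concat v with rfl | ⟨v', a, rfl⟩
      · rw [hM.1, hM.2.1]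
      rcases List.eq_nil_or_concat w with rfl | ⟨w', b, rfl⟩
      · rw [hM.1, hM.2.1]
      simp only [List.concat_eq_append] at hlen ⊢
      simp only [List.length_append, List.length_singleton] at hlen
      rw [hM.2.2, hM.2.2, hbr_comm,
        ih v' (w' ++ [b]) (by simp; omega),
        ih (v' ++ [a]) w' (by simp; omega),
        ih v' w' (by omega)]
      abel

lemma comm_all (hbr_comm : ∀ a b : A, br a b = br b a) (x y : TA A) : M x y = M y x := by
  induction x using Finsupp.induction_linear with
  | zero => simp
  | add f g hf hg => simp [map_add, hf, hg]
  | single v r =>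
      induction y using Finsupp.induction_linear with
      | zero => simp
      | add f g hf hg => simp [map_add, hf, hg]
      | single w s =>
          simp only [single_eq_smul, map_smul, LinearMap.smul_apply]
          rw [comm_words br M hM hbr_comm (v.length + w.length) v w le_rfl, smul_comm]



variable (hbr_comm : ∀ a b : A, br a b = br b a)
include hbr_comm

lemma Lx (a b : A) (u : List A) (y : TA A) :
    M (wordE (u ++ [a])) (appLetter b y) =
      appLetter b (M (wordE (u ++ [a])) y) + appLetter a (M (wordE u) (appLetter b y)) +
      appGen (br a b) (M (wordE u) y) := by
  rw [comm_all br M hM hbr_comm, Rx br M hM b a u y,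
    comm_all br M hM hbr_comm y (wordE (u ++ [a])),
    comm_all br M hM hbr_comm (appLetter b y) (wordE u),
    comm_all br M hM hbr_comm y (wordE u), hbr_comm b a]

lemma Lg (g : A →₀ ℝ) (a : A) (u : List A) (y : TA A) :
    M (wordE (u ++ [a])) (appGen g y) =
      appGen g (M (wordE (u ++ [a])) y) + appLetter a (M (wordE u) (appGen g y)) +
      appGen (brExt br (Finsupp.single a 1) g) (M (wordE u) y) := by
  rw [comm_all br M hM hbr_comm, Rg br M hM g a u y,
    comm_all br M hM hbr_comm y (wordE (u ++ [a])),
    comm_all br M hM hbr_comm (appGen g y) (wordE u),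
    comm_all br M hM hbr_comm y (wordE u), brExt_comm br hbr_comm]

lemma assoc_words (hbr_assoc : ∀ f g h : A →₀ ℝ,
      brExt br (brExt br f g) h = brExt br f (brExt br g h)) :
    ∀ n (u v w : List A), u.length + v.length + w.length ≤ n →
      M (M (wordE u) (wordE v)) (wordE w) = M (wordE u) (M (wordE v) (wordE w)) := by
  intro n
  induction n with
  | zero =>
      intro u v w h
      have hu : u = [] := by rw [← List.length_eq_zero_iff]; omega
      subst hu; rw [hM.1, hM.1]
  | succ n ih =>
      intro u v w hlen
      rcases List.eq_nil_or_concat u with rfl | ⟨u', a, rfl⟩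
      · rw [hM.1, hM.1]
      rcases List.eq_nil_or_concat v with rfl | ⟨v', b, rfl⟩
      · rw [hM.2.1, hM.1]
      rcases List.eq_nil_or_concat w with rfl | ⟨w', c, rfl⟩
      · rw [hM.2.1, hM.2.1]
      simp only [List.concat_eq_append] at hlen ⊢
      simp only [List.length_append, List.length_singleton] at hlen
      have e1 := hM.2.2 u' v' a b
      have e2 := hM.2.2 v' w' b c
      have hL : M (M (wordE (u' ++ [a])) (wordE (v' ++ [b]))) (wordE (w' ++ [c])) =
          appLetter a (M (M (wordE u') (wordE (v' ++ [b]))) (wordE (w' ++ [c])))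
        + appLetter b (M (M (wordE (u' ++ [a])) (wordE v')) (wordE (w' ++ [c])))
        + appGen (br a b) (M (M (wordE u') (wordE v')) (wordE (w' ++ [c])))
        + appLetter c (M (M (wordE (u' ++ [a])) (wordE (v' ++ [b]))) (wordE w'))
        + appGen (br a c) (M (M (wordE u') (wordE (v' ++ [b]))) (wordE w'))
        + appGen (br b c) (M (M (wordE (u' ++ [a])) (wordE v')) (wordE w'))
        + appGen (brExt br (br a b) (Finsupp.single c 1)) (M (M (wordE u') (wordE v')) (wordE w')) := by
        conv_lhs => rw [e1]
        rw [map_add, map_add, LinearMap.add_apply, LinearMap.add_apply,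
          Rx br M hM a c w' _, Rx br M hM b c w' _, Rg br M hM (br a b) c w' _]
        conv_rhs => rw [e1]
        simp only [map_add, LinearMap.add_apply]
        abel
      have hR : M (wordE (u' ++ [a])) (M (wordE (v' ++ [b])) (wordE (w' ++ [c]))) =
          appLetter a (M (wordE u') (M (wordE (v' ++ [b])) (wordE (w' ++ [c]))))
        + appLetter b (M (wordE (u' ++ [a])) (M (wordE v') (wordE (w' ++ [c]))))
        + appGen (br a b) (M (wordE u') (M (wordE v') (wordE (w' ++ [c]))))
        + appLetter c (M (wordE (u' ++ [a])) (M (wordE (v' ++ [b])) (wordE w')))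
        + appGen (br a c) (M (wordE u') (M (wordE (v' ++ [b])) (wordE w')))
        + appGen (br b c) (M (wordE (u' ++ [a])) (M (wordE v') (wordE w')))
        + appGen (brExt br (Finsupp.single a 1) (br b c)) (M (wordE u') (M (wordE v') (wordE w'))) := by
        conv_lhs => rw [e2]
        rw [map_add, map_add,
          Lx br M hM hbr_comm a b u' _, Lx br M hM hbr_comm a c u' _,
          Lg br M hM hbr_comm (br b c) a u' _]
        conv_rhs => rw [e2]
        simp only [map_add]
        abel
      have hbr3 : brExt br (br a b) (Finsupp.single c 1)
          = brExt br (Finsupp.single a 1) (br b c) := by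
        rw [← brExt_single_single br a b, hbr_assoc, brExt_single_single br b c]
      rw [hL, hR, hbr3,
        ih u' (v' ++ [b]) (w' ++ [c]) (by simp; omega),
        ih (u' ++ [a]) v' (w' ++ [c]) (by simp; omega),
        ih u' v' (w' ++ [c]) (by simp; omega),
        ih (u' ++ [a]) (v' ++ [b]) w' (by simp; omega),
        ih u' (v' ++ [b]) w' (by simp; omega),
        ih (u' ++ [a]) v' w' (by simp; omega),
        ih u' v' w' (by omega)]

end QSaux

namespace QSaux
variable {A : Type} (br : A → A → (A →₀ ℝ)) (M : TA A →ₗ[ℝ] TA A →ₗ[ℝ] TA A)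
  (hM : IsQuasiShuffle br M)
  (hbr_comm : ∀ a b : A, br a b = br b a)
  (hbr_assoc : ∀ f g h : A →₀ ℝ, brExt br (brExt br f g) h = brExt br f (brExt br g h))
include hM hbr_comm hbr_assoc

lemma assoc_all (x y z : TA A) : M (M x y) z = M x (M y z) := by
  induction x using Finsupp.induction_linear with
  | zero => simp
  | add f g hf hg => simp [map_add, LinearMap.add_apply, hf, hg]
  | single u r =>
    induction y using Finsupp.induction_linear with
    | zero => simp
    | add f g hf hg => simp [map_add, LinearMap.add_apply, hf, hg]
    | single v s =>
      induction z using Finsupp.induction_linear with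
      | zero => simp
      | add f g hf hg => simp [map_add, hf, hg]
      | single w t =>
        simp only [single_eq_smul, map_smul, LinearMap.smul_apply]
        rw [assoc_words br M hM hbr_comm hbr_assoc
          (u.length + v.length + w.length) u v w le_rfl]

end QSaux

/-- for a commutative, associative bilinear bracket on `ℝ^A`, the
quasi-shuffle product on `T(A)` is commutative and associative. -/
theorem quasiShuffle_comm_assoc {A : Type} [Fintype A]
    (br : A → A → (A →₀ ℝ))
    (hbr_comm : ∀ a b : A, br a b = br b a)
    (hbr_assoc : ∀ f g h : A →₀ ℝ, brExt br (brExt br f g) h = brExt br f (brExt br g h))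
    (M : TA A →ₗ[ℝ] TA A →ₗ[ℝ] TA A)
    (hM : IsQuasiShuffle br M) :
    (∀ x y : TA A, M x y = M y x) ∧
    (∀ x y z : TA A, M (M x y) z = M x (M y z)) := by
    exact ⟨QSaux.comm_all br M hM hbr_comm,
    QSaux.assoc_all br M hM hbr_comm hbr_assoc⟩

end
end

section
/- For any two non-empty words w = a_1⋯a_n and v = b_1⋯b_m over an alphabet A with commutative bracket [,], the quasi-shuffle product satisfies w ⊛ v = Σ_{f ∈ S_{n,m}} [a_1⋯a_n b_1⋯b_m]_f, where S_{n,m} is the set of surjections f : {1,…,n+m} → {1,…,k} (for some k with max(m,n) ≤ k ≤ n+m) that are increasing on {1,…,n} and on {n+1,…,n+m}, and [a_1⋯a_l]_f denotes the word whose j-th letter is the bracket of all a_i with f(i)=j. -/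
open Finsupp
open scoped Classical

noncomputable section

/-- Iterated bracket of a list of letters (as a generalized letter in `ℝ^A`);
`0` on the empty list (which never occurs below by surjectivity). -/
def brOfList {A : Type} (br : A → A → (A →₀ ℝ)) : List A → (A →₀ ℝ)
  | [] => 0
  | a :: t => t.foldl (fun c x => brExt br c (Finsupp.single x 1)) (Finsupp.single a 1)

/-- Left-concatenation of a generalized letter, extended bilinearly. -/
def preGen {A : Type} (c : A →₀ ℝ) (y : TA A) : TA A :=
  c.sum fun x r => r • (Finsupp.lmapDomain ℝ ℝ (fun u : List A => x :: u) y)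

/-- The word with the given list of generalized letters. -/
def genWord {A : Type} (l : List (A →₀ ℝ)) : TA A := l.foldr preGen (wordE [])

/-- The contracted word `[a₁⋯a_l]_f` along a surjection `f`: its `j`-th letter is
the bracket of all letters `u i` with `f i = j` (taken in increasing order of `i`). -/
def contractedBySurj {A : Type} (br : A → A → (A →₀ ℝ)) {N k : ℕ}
    (u : Fin N → A) (f : Fin N → Fin k) : TA A :=
  genWord (List.ofFn fun j : Fin k =>
    brOfList br (((Finset.univ.filter fun i : Fin N => f i = j).sort (· ≤ ·)).map u))

-- lemmas

variable {A : Type}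

lemma appGen_single (a : A) (y : TA A) : appGen (Finsupp.single a 1) y = appLetter a y := by
  rw [appGen, Finsupp.sum_single_index (by simp), one_smul]

lemma appGen_add (c : A →₀ ℝ) (x y : TA A) :
    appGen c (x + y) = appGen c x + appGen c y := by
  simp [appGen, Finsupp.sum, map_add, smul_add, Finset.sum_add_distrib]

lemma appGen_zero (c : A →₀ ℝ) : appGen c (0 : TA A) = 0 := by
  simp [appGen, Finsupp.sum]

lemma appGen_sum {ι : Type*} (c : A →₀ ℝ) (s : Finset ι) (g : ι → TA A) :
    appGen c (∑ i ∈ s, g i) = ∑ i ∈ s, appGen c (g i) := by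
  classical
  induction s using Finset.induction_on with
  | empty => simp [appGen_zero]
  | insert _ _ h ih => simp [Finset.sum_insert h, appGen_add, ih]

lemma preGen_appGen (c d : A →₀ ℝ) (y : TA A) :
    preGen c (appGen d y) = appGen d (preGen c y) := by
  simp only [preGen, appGen, appLetter]
  simp only [Finsupp.sum, map_sum, map_smul, Finset.smul_sum,
    Finsupp.lmapDomain_apply, smul_smul]
  rw [Finset.sum_comm]
  refine Finset.sum_congr rfl fun x _ => Finset.sum_congr rfl fun x' _ => ?_
  rw [mul_comm, ← Finsupp.mapDomain_comp, ← Finsupp.mapDomain_comp]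
  rfl

lemma genWord_concat (l : List (A →₀ ℝ)) (c : A →₀ ℝ) :
    genWord (l ++ [c]) = appGen c (genWord l) := by
  induction l with
  | nil =>
    simp only [genWord, List.nil_append, List.foldr_cons, List.foldr_nil]
    simp only [preGen, appGen, appLetter, wordE]
    refine Finsupp.sum_congr fun x _ => ?_
    simp [Finsupp.mapDomain_single]
  | cons d l ih =>
    simp only [genWord, List.cons_append, List.foldr_cons] at *
    rw [ih, preGen_appGen]

lemma genWord_singles (l : List A) :
    genWord (l.map fun x => Finsupp.single x (1:ℝ)) = wordE l := by
  induction l with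
  | nil => rfl
  | cons a l ih =>
    simp only [List.map_cons, genWord, List.foldr_cons] at *
    rw [ih, preGen, wordE, Finsupp.sum_single_index (by simp), one_smul,
      Finsupp.lmapDomain_apply, Finsupp.mapDomain_single]
    rfl

lemma brOfList_pair (br : A → A → (A →₀ ℝ)) (a b : A) :
    brOfList br [a, b] = br a b := by
  simp only [brOfList, List.foldl_cons, List.foldl_nil, brExt]
  rw [Finsupp.sum_single_index (by simp), Finsupp.sum_single_index (by simp)]
  simp

lemma sort_map {N N' : ℕ} (e : Fin N' → Fin N) (he : StrictMono e) (s : Finset (Fin N')) :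
    (s.map ⟨e, he.injective⟩).sort (· ≤ ·) = (s.sort (· ≤ ·)).map e := by
  refine (fun hp hs => List.Perm.eq_of_pairwise' (Finset.pairwise_sort _ _) hs hp) ?_ ?_
  · rw [← Multiset.coe_eq_coe]
    simp only [Finset.sort_eq, Finset.map_val, Multiset.map_coe]
    rw [← Finset.sort_eq s (· ≤ ·)]
    rfl
  · exact List.Pairwise.map e (fun a b hab => he.le_iff_le.2 hab) (Finset.pairwise_sort _ _)

lemma sort_pair {N : ℕ} (x y : Fin N) (h : x < y) :
    ({x, y} : Finset (Fin N)).sort (· ≤ ·) = [x, y] := by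
  rw [Finset.sort_insert (· ≤ ·) (by simp [le_of_lt h]) (by simp [ne_of_lt h]),
    Finset.sort_singleton]

variable {A : Type} (br : A → A → (A →₀ ℝ))

/-- The quasi-shuffle surjection set. -/
def QS (n m k : ℕ) : Finset (Fin (n + m) → Fin k) :=
  (Finset.univ : Finset (Fin (n + m) → Fin k)).filter
    (fun f => Function.Surjective f ∧
      (∀ i j : Fin (n + m), i.val < j.val → j.val < n → f i < f j) ∧
      (∀ i j : Fin (n + m), i.val < j.val → n ≤ i.val → f i < f j))

lemma mem_QS {n m k : ℕ} {f : Fin (n + m) → Fin k} :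
    f ∈ QS n m k ↔ Function.Surjective f ∧
      (∀ i j : Fin (n + m), i.val < j.val → j.val < n → f i < f j) ∧
      (∀ i j : Fin (n + m), i.val < j.val → n ≤ i.val → f i < f j) := by
  simp [QS]

lemma QS_bounds {n m k : ℕ} {f : Fin (n + m) → Fin k} (hf : f ∈ QS n m k) :
    max n m ≤ k ∧ k ≤ n + m := by
  rw [mem_QS] at hf
  obtain ⟨hs, h1, h2⟩ := hf
  have hk1 : k ≤ n + m := by
    simpa using Fintype.card_le_of_surjective f hs
  have hn : n ≤ k := by
    have : Function.Injective (fun i : Fin n => f ⟨i.val, by omega⟩) := by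
      have : StrictMono (fun i : Fin n => f ⟨i.val, by omega⟩) :=
        fun i j hij => h1 _ _ hij j.isLt
      exact this.injective
    simpa using Fintype.card_le_of_injective _ this
  have hm : m ≤ k := by
    have : Function.Injective (fun i : Fin m => f ⟨n + i.val, by omega⟩) := by
      have : StrictMono (fun i : Fin m => f ⟨n + i.val, by omega⟩) :=
        fun i j hij => h2 _ _ (by simpa using hij) (by simp)
      exact this.injective
    simpa using Fintype.card_le_of_injective _ this
  exact ⟨max_le hn hm, hk1⟩

/-- the key decomposition lemma for contracted words -/
lemma contract_step {N' N k' : ℕ} (u : Fin N → A) (e : Fin N' → Fin N) (he : StrictMono e)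
    (f : Fin N → Fin (k' + 1)) (f' : Fin N' → Fin k')
    (h1 : ∀ i, f (e i) = (f' i).castSucc)
    (h2 : ∀ x, (∀ i, e i ≠ x) → f x = Fin.last k') :
    contractedBySurj br u f =
      appGen (brOfList br
          (((Finset.univ.filter fun i => f i = Fin.last k').sort (· ≤ ·)).map u))
        (contractedBySurj br (u ∘ e) f') := by
  rw [contractedBySurj, List.ofFn_succ', List.concat_eq_append, genWord_concat]
  congr 1
  rw [contractedBySurj]
  refine congrArg genWord (congrArg List.ofFn (funext fun j' => congrArg (brOfList br) ?_))
  have hset : (Finset.univ.filter fun i : Fin N => f i = (j' : Fin k').castSucc) =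
      (Finset.univ.filter fun i : Fin N' => f' i = j').map ⟨e, he.injective⟩ := by
    ext x
    simp only [Finset.mem_filter, Finset.mem_univ, true_and, Finset.mem_map,
      Function.Embedding.coeFn_mk]
    constructor
    · intro hx
      by_cases hr : ∀ i, e i ≠ x
      · exact absurd (h2 x hr) (by rw [hx]; exact (Fin.castSucc_lt_last j').ne)
      · push_neg at hr
        obtain ⟨i, hi⟩ := hr
        refine ⟨i, ?_, hi⟩
        have := h1 i
        rw [hi, hx] at this
        exact (Fin.castSucc_injective _ this.symm)
    · rintro ⟨i, hi, rfl⟩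
      rw [h1 i, hi]
  rw [hset, sort_map e he, List.map_map]


lemma QS_empty {n m k : ℕ} (h : k < max n m ∨ n + m < k) : QS n m k = ∅ := by
  rw [Finset.eq_empty_iff_forall_notMem]
  intro f hf
  have := QS_bounds hf
  omega

lemma QS_full {n m k : ℕ} (h0 : n = 0 ∨ m = 0) (hk : n + m = k) :
    QS n m k = {fun i => ⟨i.val, hk ▸ i.isLt⟩} := by
  ext f
  simp only [Finset.mem_singleton, mem_QS]
  constructor
  · rintro ⟨hs, h1, h2⟩
    have hmono : StrictMono f := by
      intro i j hij
      rcases h0 with h0 | h0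
      · exact h2 i j hij (by omega)
      · exact h1 i j hij (by omega)
    have hmono' : StrictMono (fun i : Fin (n+m) => (⟨i.val, hk ▸ i.isLt⟩ : Fin k)) :=
      fun i j hij => hij
    apply (hmono.range_inj hmono').mp
    rw [hs.range_eq]
    have : Function.Surjective (fun i : Fin (n+m) => (⟨i.val, hk ▸ i.isLt⟩ : Fin k)) :=
      fun j => ⟨⟨j.val, by omega⟩, rfl⟩
    rw [this.range_eq]
  · rintro rfl
    refine ⟨fun j => ⟨⟨j.val, by omega⟩, rfl⟩, fun i j hij _ => hij, fun i j hij _ => hij⟩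

lemma contracted_id {N k : ℕ} (hk : N = k) (u : Fin N → A) :
    contractedBySurj br u (fun i => ⟨i.val, lt_of_lt_of_eq i.isLt hk⟩) =
      wordE (List.ofFn fun j : Fin k => u ⟨j.val, by omega⟩) := by
  rw [contractedBySurj]
  have : (List.ofFn fun j : Fin k =>
      brOfList br (((Finset.univ.filter fun i : Fin N =>
        (⟨i.val, lt_of_lt_of_eq i.isLt hk⟩ : Fin k) = j).sort (· ≤ ·)).map u)) =
      (List.ofFn fun j : Fin k => u ⟨j.val, by omega⟩).map fun x => Finsupp.single x 1 := by
    rw [List.map_ofFn]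
    refine congrArg List.ofFn (funext fun j => ?_)
    have hset : (Finset.univ.filter fun i : Fin N =>
        (⟨i.val, lt_of_lt_of_eq i.isLt hk⟩ : Fin k) = j) = {(⟨j.val, by omega⟩ : Fin N)} := by
      ext x
      simp [Fin.ext_iff]
    rw [hset, Finset.sort_singleton, List.map_singleton]
    rfl
  rw [this, genWord_singles]

lemma last_attained {n' m' k' : ℕ} {f : Fin ((n'+1) + (m'+1)) → Fin (k'+1)}
    (hf : f ∈ QS (n'+1) (m'+1) (k'+1)) :
    f ⟨n', by omega⟩ = Fin.last k' ∨ f ⟨n'+m'+1, by omega⟩ = Fin.last k' := by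
  rw [mem_QS] at hf
  obtain ⟨hs, h1, h2⟩ := hf
  obtain ⟨i, hi⟩ := hs (Fin.last k')
  by_cases hin : i.val < n' + 1
  · left
    rcases Nat.lt_or_ge i.val n' with h | h
    · have hlt : f i < f ⟨n', by omega⟩ :=
        h1 i ⟨n', by omega⟩ (by exact h) (by exact Nat.lt_succ_self n')
      rw [hi] at hlt
      exact absurd hlt (Fin.le_last _).not_gt
    · have : i = ⟨n', by omega⟩ := Fin.ext (by show i.val = n'; omega)
      rw [← this, hi]
  · right
    rcases Nat.lt_or_ge i.val (n'+m'+1) with h | h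
    · have hlt : f i < f ⟨n'+m'+1, by omega⟩ :=
        h2 i ⟨n'+m'+1, by omega⟩ (by exact h) (by omega)
      rw [hi] at hlt
      exact absurd hlt (Fin.le_last _).not_gt
    · have : i = ⟨n'+m'+1, by omega⟩ := Fin.ext (by show i.val = n'+m'+1; omega)
      rw [← this, hi]

lemma genSumBij {N N' k' : ℕ} (u : Fin N → A)
    (S : Finset (Fin N → Fin (k' + 1))) (T : Finset (Fin N' → Fin k'))
    (e : Fin N' → Fin N) (he : StrictMono e)
    (eps : (Fin N' → Fin k') → (Fin N → Fin (k' + 1)))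
    (heps1 : ∀ f' i, eps f' (e i) = (f' i).castSucc)
    (heps2 : ∀ f' x, (∀ i, e i ≠ x) → eps f' x = Fin.last k')
    (hfacts : ∀ f ∈ S, ∀ x, (∀ i, e i ≠ x) → f x = Fin.last k')
    (hfacts2 : ∀ f (hf : f ∈ S), ∀ i, f (e i) ≠ Fin.last k')
    (t : Finset (Fin N))
    (ht : ∀ f ∈ S, (Finset.univ.filter fun i => f i = Fin.last k') = t)
    (hres : ∀ f (hf : f ∈ S), (fun i => (f (e i)).castPred (hfacts2 f hf i)) ∈ T)
    (hext : ∀ f' ∈ T, eps f' ∈ S) :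
    ∑ f ∈ S, contractedBySurj br u f =
      ∑ f' ∈ T, appGen (brOfList br ((t.sort (· ≤ ·)).map u))
        (contractedBySurj br (u ∘ e) f') := by
  refine Finset.sum_bij' (fun f hf => fun i => (f (e i)).castPred (hfacts2 f hf i))
    (fun f' _ => eps f') hres hext ?_ ?_ ?_
  · intro f hf
    funext x
    show eps (fun i => (f (e i)).castPred (hfacts2 f hf i)) x = f x
    by_cases hx : ∀ i, e i ≠ x
    · rw [heps2 _ x hx, hfacts f hf x hx]
    · push_neg at hx
      obtain ⟨i, rfl⟩ := hx
      rw [heps1, Fin.castSucc_castPred]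
  · intro f' hf'
    funext i
    show (eps f' (e i)).castPred _ = f' i
    simp only [heps1 f' i, Fin.castPred_castSucc]
  · intro f hf
    rw [contract_step br u e he f (fun i => (f (e i)).castPred (hfacts2 f hf i))
      (fun i => (Fin.castSucc_castPred _ _).symm) (hfacts f hf), ht f hf]



section Cases
variable {n' m' k' : ℕ}

def pA (n' m' : ℕ) : Fin ((n'+1)+(m'+1)) := ⟨n', by omega⟩
def pB (n' m' : ℕ) : Fin ((n'+1)+(m'+1)) := ⟨n'+m'+1, by omega⟩

def eA (n' m' : ℕ) : Fin ((n'+1)+m') → Fin ((n'+1)+(m'+1)) := fun i => ⟨i.val, by omega⟩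

def epsA (n' m' k' : ℕ) (f' : Fin ((n'+1)+m') → Fin k') : Fin ((n'+1)+(m'+1)) → Fin (k'+1) :=
  fun x => if h : x.val < (n'+1)+m' then (f' ⟨x.val, h⟩).castSucc else Fin.last k'

lemma eA_strictMono : StrictMono (eA n' m') := fun _ _ hij => hij

lemma epsA_lt (f' : Fin ((n'+1)+m') → Fin k') (x : Fin ((n'+1)+(m'+1)))
    (hx : x.val < (n'+1)+m') : epsA n' m' k' f' x = (f' ⟨x.val, hx⟩).castSucc := by
  rw [epsA, dif_pos hx]

lemma epsA_eA (f' : Fin ((n'+1)+m') → Fin k') (i : Fin ((n'+1)+m')) :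
    epsA n' m' k' f' (eA n' m' i) = (f' i).castSucc := by
  rw [epsA_lt f' _ (show (eA n' m' i).val < (n'+1)+m' from i.isLt)]
  exact congrArg _ (Fin.ext rfl)

lemma epsA_last (f' : Fin ((n'+1)+m') → Fin k') (x : Fin ((n'+1)+(m'+1)))
    (hx : ∀ i, eA n' m' i ≠ x) : epsA n' m' k' f' x = Fin.last k' := by
  rw [epsA]
  refine dif_neg fun h => hx ⟨x.val, h⟩ (Fin.ext rfl)

lemma caseA_facts {f : Fin ((n'+1)+(m'+1)) → Fin (k'+1)}
    (hf : f ∈ QS (n'+1) (m'+1) (k'+1))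
    (hc : f (pA n' m') < f (pB n' m')) :
    f (pB n' m') = Fin.last k' ∧
      ∀ x, x ≠ pB n' m' → f x < Fin.last k' := by
  have hlast := last_attained hf
  rw [mem_QS] at hf
  obtain ⟨hs, h1, h2⟩ := hf
  have hB : f (pB n' m') = Fin.last k' := by
    rcases hlast with h | h
    · exact absurd ((show f (pA n' m') = Fin.last k' from h) ▸ hc) (Fin.le_last _).not_gt
    · exact h
  refine ⟨hB, fun x hx => ?_⟩
  have hxv : x.val ≠ n'+m'+1 := fun hh => hx (Fin.ext hh)
  rcases lt_trichotomy x.val n' with h | h | h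
  · exact (h1 x (pA n' m') (by exact h) (by exact Nat.lt_succ_self n')).trans (hB ▸ hc)
  · have : x = pA n' m' := Fin.ext (by exact h)
    rw [this]; exact hB ▸ hc
  · have := h2 x (pB n' m') (by show x.val < n'+m'+1; omega) (by omega)
    exact hB ▸ this

lemma extA_mem (f' : Fin ((n'+1)+m') → Fin k') (hf' : f' ∈ QS (n'+1) m' k') :
    epsA n' m' k' f' ∈ (QS (n'+1) (m'+1) (k'+1)).filter
      (fun f => f (pA n' m') < f (pB n' m')) := by
  rw [mem_QS] at hf'
  obtain ⟨hs, h1, h2⟩ := hf'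
  have hlastval : epsA n' m' k' f' (pB n' m') = Fin.last k' := by
    rw [epsA, dif_neg (by show ¬ (n'+m'+1 < (n'+1)+m'); omega)]
  rw [Finset.mem_filter, mem_QS]
  refine ⟨⟨?_, ?_, ?_⟩, ?_⟩
  · intro j
    rcases Fin.eq_castSucc_or_eq_last j with ⟨j', rfl⟩ | rfl
    · obtain ⟨i, hi⟩ := hs j'
      exact ⟨eA n' m' i, by rw [epsA_eA, hi]⟩
    · exact ⟨pB n' m', hlastval⟩
  · intro i j hij hjn
    have hj : j.val < (n'+1)+m' := by omega
    have hi : i.val < (n'+1)+m' := by omega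
    rw [epsA_lt f' i hi, epsA_lt f' j hj, Fin.castSucc_lt_castSucc_iff]
    exact h1 _ _ (by exact hij) (by exact hjn)
  · intro i j hij hin
    by_cases hj : j.val < (n'+1)+m'
    · have hi : i.val < (n'+1)+m' := by omega
      rw [epsA_lt f' i hi, epsA_lt f' j hj, Fin.castSucc_lt_castSucc_iff]
      exact h2 _ _ (by exact hij) (by exact hin)
    · have hjv : j = pB n' m' := Fin.ext (by show j.val = n'+m'+1; omega)
      have hi : i.val < (n'+1)+m' := by omega
      rw [epsA_lt f' i hi, hjv, hlastval]
      exact Fin.castSucc_lt_last _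
  · rw [epsA_lt f' (pA n' m') (by show n' < (n'+1)+m'; omega), hlastval]
    exact Fin.castSucc_lt_last _

lemma resA_mem (f : Fin ((n'+1)+(m'+1)) → Fin (k'+1))
    (hf : f ∈ (QS (n'+1) (m'+1) (k'+1)).filter (fun f => f (pA n' m') < f (pB n' m')))
    (pf : ∀ i, f (eA n' m' i) ≠ Fin.last k') :
    (fun i => (f (eA n' m' i)).castPred (pf i)) ∈ QS (n'+1) m' k' := by
  have hfacts := caseA_facts (Finset.mem_filter.mp hf).1 (Finset.mem_filter.mp hf).2
  have hQ := (Finset.mem_filter.mp hf).1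
  rw [mem_QS] at hQ ⊢
  obtain ⟨hs, h1, h2⟩ := hQ
  refine ⟨?_, ?_, ?_⟩
  · intro j'
    obtain ⟨x, hx⟩ := hs j'.castSucc
    have hxv : x.val ≠ n'+m'+1 := by
      intro hh
      rw [show x = pB n' m' from Fin.ext hh, hfacts.1] at hx
      exact absurd hx.symm (Fin.castSucc_lt_last j').ne
    refine ⟨⟨x.val, by omega⟩, ?_⟩
    apply Fin.castSucc_injective
    rw [Fin.castSucc_castPred]
    rw [show eA n' m' ⟨x.val, by omega⟩ = x from Fin.ext rfl, hx]
  · intro i j hij hjn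
    exact Fin.castPred_lt_castPred_iff.2 (h1 (eA n' m' i) (eA n' m' j) (by exact hij) (by exact hjn))
  · intro i j hij hin
    exact Fin.castPred_lt_castPred_iff.2 (h2 (eA n' m' i) (eA n' m' j) (by exact hij) (by exact hin))

lemma bijA (u : Fin ((n'+1)+(m'+1)) → A) :
    ∑ f ∈ (QS (n'+1) (m'+1) (k'+1)).filter
        (fun f => f (pA n' m') < f (pB n' m')),
      contractedBySurj br u f =
    ∑ f' ∈ QS (n'+1) m' k',
      appLetter (u (pB n' m')) (contractedBySurj br (u ∘ eA n' m') f') := by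
  have hfacts2 : ∀ f (hf : f ∈ (QS (n'+1) (m'+1) (k'+1)).filter
      (fun f => f (pA n' m') < f (pB n' m'))), ∀ i, f (eA n' m' i) ≠ Fin.last k' := by
    intro f hf i
    have hfacts := caseA_facts (Finset.mem_filter.mp hf).1 (Finset.mem_filter.mp hf).2
    exact (hfacts.2 (eA n' m' i) (fun hh => by
      have : i.val = n'+m'+1 := congrArg Fin.val hh
      omega)).ne
  have key := genSumBij br u _ _ (eA n' m') eA_strictMono (epsA n' m' k')
    epsA_eA epsA_last
    (fun f hf x hx => by
      have hfacts := caseA_facts (Finset.mem_filter.mp hf).1 (Finset.mem_filter.mp hf).2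
      have hxv : x.val = n'+m'+1 := by
        by_contra hne
        exact hx ⟨x.val, by omega⟩ (Fin.ext rfl)
      rw [show x = pB n' m' from Fin.ext hxv]
      exact hfacts.1)
    hfacts2
    {pB n' m'}
    (fun f hf => by
      have hfacts := caseA_facts (Finset.mem_filter.mp hf).1 (Finset.mem_filter.mp hf).2
      ext x
      simp only [Finset.mem_filter, Finset.mem_univ, true_and, Finset.mem_singleton]
      constructor
      · intro hh
        by_contra hne
        exact absurd hh (hfacts.2 x hne).ne
      · rintro rfl
        exact hfacts.1)
    (fun f hf => resA_mem f hf (hfacts2 f hf))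
    extA_mem
  rw [key]
  refine Finset.sum_congr rfl fun f' _ => ?_
  rw [Finset.sort_singleton, List.map_singleton]
  exact appGen_single _ _


/-! ### Case B -/

def eB (n' m' : ℕ) : Fin (n'+(m'+1)) → Fin ((n'+1)+(m'+1)) :=
  fun i => ⟨if i.val < n' then i.val else i.val + 1, by split_ifs <;> omega⟩

def epsB (n' m' k' : ℕ) (f' : Fin (n'+(m'+1)) → Fin k') : Fin ((n'+1)+(m'+1)) → Fin (k'+1) :=
  fun x =>
    if h1 : x.val < n' then (f' ⟨x.val, by omega⟩).castSucc
    else if h2 : x.val = n' then Fin.last k'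
    else (f' ⟨x.val - 1, by omega⟩).castSucc

lemma eB_val (i : Fin (n'+(m'+1))) :
    (eB n' m' i).val = if i.val < n' then i.val else i.val + 1 := rfl

lemma eB_strictMono : StrictMono (eB n' m') := by
  intro i j hij
  have hv : i.val < j.val := hij
  show (eB n' m' i).val < (eB n' m' j).val
  rw [eB_val, eB_val]
  split_ifs <;> omega

lemma epsB_eB (f' : Fin (n'+(m'+1)) → Fin k') (i : Fin (n'+(m'+1))) :
    epsB n' m' k' f' (eB n' m' i) = (f' i).castSucc := by
  rw [epsB]
  by_cases h : i.val < n'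
  · rw [dif_pos (show (eB n' m' i).val < n' by rw [eB_val]; simpa [h] using h)]
    exact congrArg _ (congrArg f' (Fin.ext (by rw [eB_val, if_pos h])))
  · have hv : (eB n' m' i).val = i.val + 1 := by rw [eB_val, if_neg h]
    rw [dif_neg (by omega), dif_neg (by omega)]
    exact congrArg _ (congrArg f' (Fin.ext (by show (eB n' m' i).val - 1 = i.val; omega)))

lemma epsB_last (f' : Fin (n'+(m'+1)) → Fin k') (x : Fin ((n'+1)+(m'+1)))
    (hx : ∀ i, eB n' m' i ≠ x) : epsB n' m' k' f' x = Fin.last k' := by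
  have hxv : x.val = n' := by
    by_contra hne
    rcases Nat.lt_or_ge x.val n' with h | h
    · exact hx ⟨x.val, by omega⟩ (Fin.ext (by rw [eB_val, if_pos (by exact h)]))
    · have h' : n' < x.val := by omega
      exact hx ⟨x.val - 1, by omega⟩ (Fin.ext (by
        rw [eB_val, if_neg (by show ¬ (x.val - 1 < n'); omega)]
        show x.val - 1 + 1 = x.val; omega))
  rw [epsB, dif_neg (by omega), dif_pos hxv]

lemma caseB_facts {f : Fin ((n'+1)+(m'+1)) → Fin (k'+1)}
    (hf : f ∈ QS (n'+1) (m'+1) (k'+1))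
    (hc : f (pB n' m') < f (pA n' m')) :
    f (pA n' m') = Fin.last k' ∧
      ∀ x, x ≠ pA n' m' → f x < Fin.last k' := by
  have hlast := last_attained hf
  rw [mem_QS] at hf
  obtain ⟨hs, h1, h2⟩ := hf
  have hA : f (pA n' m') = Fin.last k' := by
    rcases hlast with h | h
    · exact h
    · exact absurd ((show f (pB n' m') = Fin.last k' from h) ▸ hc) (Fin.le_last _).not_gt
  refine ⟨hA, fun x hx => ?_⟩
  have hxv : x.val ≠ n' := fun hh => hx (Fin.ext hh)
  rcases Nat.lt_or_ge x.val n' with h | h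
  · exact hA ▸ h1 x (pA n' m') (by exact h) (by exact Nat.lt_succ_self n')
  · rcases Nat.lt_or_ge x.val (n'+m'+1) with h' | h'
    · exact ((h2 x (pB n' m') (by show x.val < n'+m'+1; omega) (by omega))).trans (hA ▸ hc)
    · have : x = pB n' m' := Fin.ext (by show x.val = n'+m'+1; omega)
      rw [this]; exact hA ▸ hc

lemma extB_mem (f' : Fin (n'+(m'+1)) → Fin k') (hf' : f' ∈ QS n' (m'+1) k') :
    epsB n' m' k' f' ∈ (QS (n'+1) (m'+1) (k'+1)).filter
      (fun f => f (pB n' m') < f (pA n' m')) := by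
  rw [mem_QS] at hf'
  obtain ⟨hs, h1, h2⟩ := hf'
  have hAval : epsB n' m' k' f' (pA n' m') = Fin.last k' := by
    rw [epsB, dif_neg (by show ¬ (n' < n'); omega), dif_pos (show (pA n' m').val = n' from rfl)]
  have hval1 : ∀ x : Fin ((n'+1)+(m'+1)), (hx : x.val < n') →
      epsB n' m' k' f' x = (f' ⟨x.val, by omega⟩).castSucc := by
    intro x hx; rw [epsB, dif_pos hx]
  have hval3 : ∀ x : Fin ((n'+1)+(m'+1)), (hx : n' < x.val) →
      epsB n' m' k' f' x = (f' ⟨x.val - 1, by omega⟩).castSucc := by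
    intro x hx; rw [epsB, dif_neg (by omega), dif_neg (by omega)]
  rw [Finset.mem_filter, mem_QS]
  refine ⟨⟨?_, ?_, ?_⟩, ?_⟩
  · intro j
    rcases Fin.eq_castSucc_or_eq_last j with ⟨j', rfl⟩ | rfl
    · obtain ⟨i, hi⟩ := hs j'
      exact ⟨eB n' m' i, by rw [epsB_eB, hi]⟩
    · exact ⟨pA n' m', hAval⟩
  · intro i j hij hjn
    rcases Nat.lt_or_ge j.val n' with hj | hj
    · rw [hval1 i (by omega), hval1 j hj, Fin.castSucc_lt_castSucc_iff]
      exact h1 _ _ (by exact hij) (by exact hj)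
    · have hjv : j = pA n' m' := Fin.ext (by show j.val = n'; omega)
      rw [hval1 i (by omega),
        show epsB n' m' k' f' j = Fin.last k' from by rw [hjv]; exact hAval]
      exact Fin.castSucc_lt_last _
  · intro i j hij hin
    rw [hval3 i (by omega), hval3 j (by omega), Fin.castSucc_lt_castSucc_iff]
    exact h2 _ _ (by show i.val - 1 < j.val - 1; omega) (by show n' ≤ i.val - 1; omega)
  · rw [hval3 (pB n' m') (by show n' < n'+m'+1; omega), hAval]
    exact Fin.castSucc_lt_last _

lemma resB_mem (f : Fin ((n'+1)+(m'+1)) → Fin (k'+1))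
    (hf : f ∈ (QS (n'+1) (m'+1) (k'+1)).filter (fun f => f (pB n' m') < f (pA n' m')))
    (pf : ∀ i, f (eB n' m' i) ≠ Fin.last k') :
    (fun i => (f (eB n' m' i)).castPred (pf i)) ∈ QS n' (m'+1) k' := by
  have hfacts := caseB_facts (Finset.mem_filter.mp hf).1 (Finset.mem_filter.mp hf).2
  have hQ := (Finset.mem_filter.mp hf).1
  rw [mem_QS] at hQ ⊢
  obtain ⟨hs, h1, h2⟩ := hQ
  refine ⟨?_, ?_, ?_⟩
  · intro j'
    obtain ⟨x, hx⟩ := hs j'.castSucc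
    have hxv : x.val ≠ n' := by
      intro hh
      rw [show x = pA n' m' from Fin.ext hh, hfacts.1] at hx
      exact absurd hx.symm (Fin.castSucc_lt_last j').ne
    rcases Nat.lt_or_ge x.val n' with h | h
    · refine ⟨⟨x.val, by omega⟩, ?_⟩
      apply Fin.castSucc_injective
      rw [Fin.castSucc_castPred,
        show eB n' m' ⟨x.val, by omega⟩ = x from Fin.ext (by rw [eB_val, if_pos (by exact h)]),
        hx]
    · refine ⟨⟨x.val - 1, by omega⟩, ?_⟩
      apply Fin.castSucc_injective
      rw [Fin.castSucc_castPred,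
        show eB n' m' ⟨x.val - 1, by omega⟩ = x from Fin.ext (by
          rw [eB_val, if_neg (by show ¬ (x.val - 1 < n'); omega)]
          show x.val - 1 + 1 = x.val; omega),
        hx]
  · intro i j hij hjn
    refine Fin.castPred_lt_castPred_iff.2 (h1 (eB n' m' i) (eB n' m' j) ?_ ?_)
    · show (eB n' m' i).val < (eB n' m' j).val
      rw [eB_val, eB_val]; split_ifs <;> omega
    · show (eB n' m' j).val < n' + 1
      rw [eB_val]; split_ifs <;> omega
  · intro i j hij hin
    refine Fin.castPred_lt_castPred_iff.2 (h2 (eB n' m' i) (eB n' m' j) ?_ ?_)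
    · show (eB n' m' i).val < (eB n' m' j).val
      rw [eB_val, eB_val]; split_ifs <;> omega
    · show n' + 1 ≤ (eB n' m' i).val
      rw [eB_val]; split_ifs <;> omega

lemma bijB (u : Fin ((n'+1)+(m'+1)) → A) :
    ∑ f ∈ (QS (n'+1) (m'+1) (k'+1)).filter
        (fun f => f (pB n' m') < f (pA n' m')),
      contractedBySurj br u f =
    ∑ f' ∈ QS n' (m'+1) k',
      appLetter (u (pA n' m')) (contractedBySurj br (u ∘ eB n' m') f') := by
  have hfacts2 : ∀ f (hf : f ∈ (QS (n'+1) (m'+1) (k'+1)).filter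
      (fun f => f (pB n' m') < f (pA n' m'))), ∀ i, f (eB n' m' i) ≠ Fin.last k' := by
    intro f hf i
    have hfacts := caseB_facts (Finset.mem_filter.mp hf).1 (Finset.mem_filter.mp hf).2
    refine (hfacts.2 (eB n' m' i) (fun hh => ?_)).ne
    have : (eB n' m' i).val = n' := congrArg Fin.val hh
    rw [eB_val] at this
    split_ifs at this <;> omega
  have key := genSumBij br u _ _ (eB n' m') eB_strictMono (epsB n' m' k')
    epsB_eB epsB_last
    (fun f hf x hx => by
      have hfacts := caseB_facts (Finset.mem_filter.mp hf).1 (Finset.mem_filter.mp hf).2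
      have hxv : x.val = n' := by
        by_contra hne
        rcases Nat.lt_or_ge x.val n' with h | h
        · exact hx ⟨x.val, by omega⟩ (Fin.ext (by rw [eB_val, if_pos (by exact h)]))
        · exact hx ⟨x.val - 1, by omega⟩ (Fin.ext (by
            rw [eB_val, if_neg (by show ¬ (x.val - 1 < n'); omega)]
            show x.val - 1 + 1 = x.val; omega))
      rw [show x = pA n' m' from Fin.ext hxv]
      exact hfacts.1)
    hfacts2
    {pA n' m'}
    (fun f hf => by
      have hfacts := caseB_facts (Finset.mem_filter.mp hf).1 (Finset.mem_filter.mp hf).2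
      ext x
      simp only [Finset.mem_filter, Finset.mem_univ, true_and, Finset.mem_singleton]
      constructor
      · intro hh
        by_contra hne
        exact absurd hh (hfacts.2 x hne).ne
      · rintro rfl
        exact hfacts.1)
    (fun f hf => resB_mem f hf (hfacts2 f hf))
    extB_mem
  rw [key]
  refine Finset.sum_congr rfl fun f' _ => ?_
  rw [Finset.sort_singleton, List.map_singleton]
  exact appGen_single _ _

/-! ### Case C -/


def eC (n' m' : ℕ) : Fin (n'+m') → Fin ((n'+1)+(m'+1)) :=
  fun i => ⟨if i.val < n' then i.val else i.val + 1, by split_ifs <;> omega⟩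

def epsC (n' m' k' : ℕ) (f' : Fin (n'+m') → Fin k') : Fin ((n'+1)+(m'+1)) → Fin (k'+1) :=
  fun x =>
    if h1 : x.val < n' then (f' ⟨x.val, by omega⟩).castSucc
    else if h2 : x.val = n' ∨ x.val = n'+m'+1 then Fin.last k'
    else (f' ⟨x.val - 1, by omega⟩).castSucc

lemma eC_val (i : Fin (n'+m')) :
    (eC n' m' i).val = if i.val < n' then i.val else i.val + 1 := rfl

lemma eC_strictMono : StrictMono (eC n' m') := by
  intro i j hij
  have hv : i.val < j.val := hij
  show (eC n' m' i).val < (eC n' m' j).val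
  rw [eC_val, eC_val]
  split_ifs <;> omega

lemma eC_ne_pA (i : Fin (n'+m')) : eC n' m' i ≠ pA n' m' := by
  intro hh
  have : (eC n' m' i).val = n' := congrArg Fin.val hh
  rw [eC_val] at this
  split_ifs at this <;> omega

lemma eC_ne_pB (i : Fin (n'+m')) : eC n' m' i ≠ pB n' m' := by
  intro hh
  have hv : (eC n' m' i).val = n'+m'+1 := congrArg Fin.val hh
  rw [eC_val] at hv
  have hlt := i.isLt
  split_ifs at hv <;> omega

lemma epsC_eC (f' : Fin (n'+m') → Fin k') (i : Fin (n'+m')) :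
    epsC n' m' k' f' (eC n' m' i) = (f' i).castSucc := by
  rw [epsC]
  by_cases h : i.val < n'
  · rw [dif_pos (show (eC n' m' i).val < n' by rw [eC_val, if_pos h]; exact h)]
    exact congrArg _ (congrArg f' (Fin.ext (by rw [eC_val, if_pos h])))
  · have hv : (eC n' m' i).val = i.val + 1 := by rw [eC_val, if_neg h]
    have hi := i.isLt
    rw [dif_neg (by omega), dif_neg (by omega)]
    exact congrArg _ (congrArg f' (Fin.ext (by show (eC n' m' i).val - 1 = i.val; omega)))

lemma epsC_last (f' : Fin (n'+m') → Fin k') (x : Fin ((n'+1)+(m'+1)))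
    (hx : ∀ i, eC n' m' i ≠ x) : epsC n' m' k' f' x = Fin.last k' := by
  have hxv : x.val = n' ∨ x.val = n'+m'+1 := by
    by_contra hne
    push_neg at hne
    rcases Nat.lt_or_ge x.val n' with h | h
    · exact hx ⟨x.val, by omega⟩ (Fin.ext (by rw [eC_val, if_pos (by exact h)]))
    · exact hx ⟨x.val - 1, by omega⟩ (Fin.ext (by
        rw [eC_val, if_neg (by show ¬ (x.val - 1 < n'); omega)]
        show x.val - 1 + 1 = x.val; omega))
  rw [epsC, dif_neg (by omega), dif_pos hxv]

lemma caseC_facts {f : Fin ((n'+1)+(m'+1)) → Fin (k'+1)}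
    (hf : f ∈ QS (n'+1) (m'+1) (k'+1))
    (hc : f (pA n' m') = f (pB n' m')) :
    f (pA n' m') = Fin.last k' ∧ f (pB n' m') = Fin.last k' ∧
      ∀ x, x ≠ pA n' m' → x ≠ pB n' m' → f x < Fin.last k' := by
  have hlast := last_attained hf
  rw [mem_QS] at hf
  obtain ⟨hs, h1, h2⟩ := hf
  have hA : f (pA n' m') = Fin.last k' := by
    rcases hlast with h | h
    · exact h
    · exact hc.trans h
  have hB : f (pB n' m') = Fin.last k' := hc ▸ hA
  refine ⟨hA, hB, fun x hxA hxB => ?_⟩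
  have hxv : x.val ≠ n' := fun hh => hxA (Fin.ext hh)
  have hxv' : x.val ≠ n'+m'+1 := fun hh => hxB (Fin.ext hh)
  rcases Nat.lt_or_ge x.val n' with h | h
  · exact hA ▸ h1 x (pA n' m') (by exact h) (by exact Nat.lt_succ_self n')
  · exact hB ▸ h2 x (pB n' m') (by show x.val < n'+m'+1; omega) (by omega)

lemma extC_mem (f' : Fin (n'+m') → Fin k') (hf' : f' ∈ QS n' m' k') :
    epsC n' m' k' f' ∈ (QS (n'+1) (m'+1) (k'+1)).filter
      (fun f => f (pA n' m') = f (pB n' m')) := by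
  rw [mem_QS] at hf'
  obtain ⟨hs, h1, h2⟩ := hf'
  have hAval : epsC n' m' k' f' (pA n' m') = Fin.last k' := by
    rw [epsC, dif_neg (by show ¬ (n' < n'); omega), dif_pos (Or.inl (show (pA n' m').val = n' from rfl))]
  have hBval : epsC n' m' k' f' (pB n' m') = Fin.last k' := by
    rw [epsC, dif_neg (by show ¬ (n'+m'+1 < n'); omega), dif_pos (Or.inr (show (pB n' m').val = n'+m'+1 from rfl))]
  have hval1 : ∀ x : Fin ((n'+1)+(m'+1)), (hx : x.val < n') →
      epsC n' m' k' f' x = (f' ⟨x.val, by omega⟩).castSucc := by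
    intro x hx; rw [epsC, dif_pos hx]
  have hval3 : ∀ x : Fin ((n'+1)+(m'+1)), (hx : n' < x.val) → (hx' : x.val < n'+m'+1) →
      epsC n' m' k' f' x = (f' ⟨x.val - 1, by omega⟩).castSucc := by
    intro x hx hx'; rw [epsC, dif_neg (by omega), dif_neg (by omega)]
  rw [Finset.mem_filter, mem_QS]
  refine ⟨⟨?_, ?_, ?_⟩, by rw [hAval, hBval]⟩
  · intro j
    rcases Fin.eq_castSucc_or_eq_last j with ⟨j', rfl⟩ | rfl
    · obtain ⟨i, hi⟩ := hs j'
      exact ⟨eC n' m' i, by rw [epsC_eC, hi]⟩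
    · exact ⟨pA n' m', hAval⟩
  · intro i j hij hjn
    rcases Nat.lt_or_ge j.val n' with hj | hj
    · rw [hval1 i (by omega), hval1 j hj, Fin.castSucc_lt_castSucc_iff]
      exact h1 _ _ (by exact hij) (by exact hj)
    · have hjv : j = pA n' m' := Fin.ext (by show j.val = n'; omega)
      rw [hval1 i (by omega),
        show epsC n' m' k' f' j = Fin.last k' from by rw [hjv]; exact hAval]
      exact Fin.castSucc_lt_last _
  · intro i j hij hin
    rcases Nat.lt_or_ge j.val (n'+m'+1) with hj | hj
    · rw [hval3 i (by omega) (by omega), hval3 j (by omega) hj,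
        Fin.castSucc_lt_castSucc_iff]
      exact h2 _ _ (by show i.val - 1 < j.val - 1; omega) (by show n' ≤ i.val - 1; omega)
    · have hjv : j = pB n' m' := Fin.ext (by show j.val = n'+m'+1; omega)
      rw [hval3 i (by omega) (by omega),
        show epsC n' m' k' f' j = Fin.last k' from by rw [hjv]; exact hBval]
      exact Fin.castSucc_lt_last _

lemma resC_mem (f : Fin ((n'+1)+(m'+1)) → Fin (k'+1))
    (hf : f ∈ (QS (n'+1) (m'+1) (k'+1)).filter (fun f => f (pA n' m') = f (pB n' m')))
    (pf : ∀ i, f (eC n' m' i) ≠ Fin.last k') :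
    (fun i => (f (eC n' m' i)).castPred (pf i)) ∈ QS n' m' k' := by
  have hfacts := caseC_facts (Finset.mem_filter.mp hf).1 (Finset.mem_filter.mp hf).2
  have hQ := (Finset.mem_filter.mp hf).1
  rw [mem_QS] at hQ ⊢
  obtain ⟨hs, h1, h2⟩ := hQ
  refine ⟨?_, ?_, ?_⟩
  · intro j'
    obtain ⟨x, hx⟩ := hs j'.castSucc
    have hxv : x.val ≠ n' := by
      intro hh
      rw [show x = pA n' m' from Fin.ext hh, hfacts.1] at hx
      exact absurd hx.symm (Fin.castSucc_lt_last j').ne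
    have hxv' : x.val ≠ n'+m'+1 := by
      intro hh
      rw [show x = pB n' m' from Fin.ext hh, hfacts.2.1] at hx
      exact absurd hx.symm (Fin.castSucc_lt_last j').ne
    rcases Nat.lt_or_ge x.val n' with h | h
    · refine ⟨⟨x.val, by omega⟩, ?_⟩
      apply Fin.castSucc_injective
      rw [Fin.castSucc_castPred,
        show eC n' m' ⟨x.val, by omega⟩ = x from Fin.ext (by rw [eC_val, if_pos (by exact h)]),
        hx]
    · refine ⟨⟨x.val - 1, by omega⟩, ?_⟩
      apply Fin.castSucc_injective
      rw [Fin.castSucc_castPred,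
        show eC n' m' ⟨x.val - 1, by omega⟩ = x from Fin.ext (by
          rw [eC_val, if_neg (by show ¬ (x.val - 1 < n'); omega)]
          show x.val - 1 + 1 = x.val; omega),
        hx]
  · intro i j hij hjn
    refine Fin.castPred_lt_castPred_iff.2 (h1 (eC n' m' i) (eC n' m' j) ?_ ?_)
    · show (eC n' m' i).val < (eC n' m' j).val
      rw [eC_val, eC_val]; split_ifs <;> omega
    · show (eC n' m' j).val < n' + 1
      rw [eC_val]; split_ifs <;> omega
  · intro i j hij hin
    refine Fin.castPred_lt_castPred_iff.2 (h2 (eC n' m' i) (eC n' m' j) ?_ ?_)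
    · show (eC n' m' i).val < (eC n' m' j).val
      rw [eC_val, eC_val]; split_ifs <;> omega
    · show n' + 1 ≤ (eC n' m' i).val
      rw [eC_val]; split_ifs <;> omega

lemma pA_lt_pB : pA n' m' < pB n' m' := by
  rw [pA, pB]
  exact Fin.mk_lt_mk.2 (by omega)

lemma bijC (u : Fin ((n'+1)+(m'+1)) → A) :
    ∑ f ∈ (QS (n'+1) (m'+1) (k'+1)).filter
        (fun f => f (pA n' m') = f (pB n' m')),
      contractedBySurj br u f =
    ∑ f' ∈ QS n' m' k',
      appGen (br (u (pA n' m')) (u (pB n' m'))) (contractedBySurj br (u ∘ eC n' m') f') := by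
  have hfacts2 : ∀ f (hf : f ∈ (QS (n'+1) (m'+1) (k'+1)).filter
      (fun f => f (pA n' m') = f (pB n' m'))), ∀ i, f (eC n' m' i) ≠ Fin.last k' := by
    intro f hf i
    have hfacts := caseC_facts (Finset.mem_filter.mp hf).1 (Finset.mem_filter.mp hf).2
    exact (hfacts.2.2 (eC n' m' i) (eC_ne_pA i) (eC_ne_pB i)).ne
  have key := genSumBij br u _ _ (eC n' m') eC_strictMono (epsC n' m' k')
    epsC_eC epsC_last
    (fun f hf x hx => by
      have hfacts := caseC_facts (Finset.mem_filter.mp hf).1 (Finset.mem_filter.mp hf).2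
      have hxv : x.val = n' ∨ x.val = n'+m'+1 := by
        by_contra hne
        push_neg at hne
        rcases Nat.lt_or_ge x.val n' with h | h
        · exact hx ⟨x.val, by omega⟩ (Fin.ext (by rw [eC_val, if_pos (by exact h)]))
        · exact hx ⟨x.val - 1, by omega⟩ (Fin.ext (by
            rw [eC_val, if_neg (by show ¬ (x.val - 1 < n'); omega)]
            show x.val - 1 + 1 = x.val; omega))
      rcases hxv with h | h
      · rw [show x = pA n' m' from Fin.ext h]; exact hfacts.1
      · rw [show x = pB n' m' from Fin.ext h]; exact hfacts.2.1)
    hfacts2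
    {pA n' m', pB n' m'}
    (fun f hf => by
      have hfacts := caseC_facts (Finset.mem_filter.mp hf).1 (Finset.mem_filter.mp hf).2
      ext x
      simp only [Finset.mem_filter, Finset.mem_univ, true_and, Finset.mem_insert,
        Finset.mem_singleton]
      constructor
      · intro hh
        by_contra hne
        push_neg at hne
        exact absurd hh (hfacts.2.2 x hne.1 hne.2).ne
      · rintro (rfl | rfl)
        · exact hfacts.1
        · exact hfacts.2.1)
    (fun f hf => resC_mem f hf (hfacts2 f hf))
    extC_mem
  rw [key]
  refine Finset.sum_congr rfl fun f' _ => ?_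
  rw [sort_pair _ _ pA_lt_pB, List.map_cons, List.map_singleton, brOfList_pair]
end Cases



def Rsum {A : Type} (br : A → A → (A →₀ ℝ)) (n m : ℕ) (u : Fin (n + m) → A) : TA A :=
  ∑ k ∈ Finset.range (n + m + 1), ∑ f ∈ QS n m k, contractedBySurj br u f

def glue {A : Type} {n m : ℕ} (wa : Fin n → A) (wb : Fin m → A) : Fin (n + m) → A :=
  fun i => if h : i.val < n then wa ⟨i.val, h⟩ else wb ⟨i.val - n + 0, by omega⟩

section Assembly
variable {n' m' k' : ℕ}

lemma RsumA (v : Fin ((n'+1)+m') → A) :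
    ∑ k' ∈ Finset.range ((n'+1)+(m'+1)),
      ∑ f' ∈ QS (n'+1) m' k', contractedBySurj br v f' = Rsum br (n'+1) m' v := rfl

lemma RsumB (v : Fin (n'+(m'+1)) → A) :
    ∑ k' ∈ Finset.range ((n'+1)+(m'+1)),
      ∑ f' ∈ QS n' (m'+1) k', contractedBySurj br v f' = Rsum br n' (m'+1) v := by
  rw [Rsum, show (n'+1)+(m'+1) = n'+(m'+1)+1 from by omega]

lemma RsumC (v : Fin (n'+m') → A) :
    ∑ k' ∈ Finset.range ((n'+1)+(m'+1)),
      ∑ f' ∈ QS n' m' k', contractedBySurj br v f' = Rsum br n' m' v := by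
  rw [show (n'+1)+(m'+1) = (n'+m'+1)+1 from by omega, Finset.sum_range_succ,
    show QS n' m' (n'+m'+1) = ∅ from QS_empty (Or.inr (by omega)),
    Finset.sum_empty, add_zero, Rsum]

lemma Rstep (u : Fin ((n'+1)+(m'+1)) → A) :
    Rsum br (n'+1) (m'+1) u =
      appLetter (u (pA n' m')) (Rsum br n' (m'+1) (u ∘ eB n' m')) +
      appLetter (u (pB n' m')) (Rsum br (n'+1) m' (u ∘ eA n' m')) +
      appGen (br (u (pA n' m')) (u (pB n' m'))) (Rsum br n' m' (u ∘ eC n' m')) := by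
  rw [Rsum, Finset.sum_range_succ']
  have h0 : ∑ f ∈ QS (n'+1) (m'+1) 0, contractedBySurj br u f = 0 :=
    Finset.sum_eq_zero fun f _ => (f ⟨0, by omega⟩).elim0
  rw [h0, add_zero]
  have hsplit : ∀ k' : ℕ,
      ∑ f ∈ QS (n'+1) (m'+1) (k'+1), contractedBySurj br u f =
        (∑ f ∈ (QS (n'+1) (m'+1) (k'+1)).filter
            (fun f => f (pB n' m') < f (pA n' m')), contractedBySurj br u f) +
        ((∑ f ∈ (QS (n'+1) (m'+1) (k'+1)).filter
            (fun f => f (pA n' m') < f (pB n' m')), contractedBySurj br u f) +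
         (∑ f ∈ (QS (n'+1) (m'+1) (k'+1)).filter
            (fun f => f (pA n' m') = f (pB n' m')), contractedBySurj br u f)) := by
    intro k'
    rw [← Finset.sum_filter_add_sum_filter_not (QS (n'+1) (m'+1) (k'+1))
      (fun f => f (pB n' m') < f (pA n' m'))]
    congr 1
    rw [← Finset.sum_filter_add_sum_filter_not
      ((QS (n'+1) (m'+1) (k'+1)).filter (fun f => ¬ f (pB n' m') < f (pA n' m')))
      (fun f => f (pA n' m') < f (pB n' m'))]
    congr 1
    · rw [Finset.filter_filter]
      exact Finset.sum_congr (Finset.filter_congr fun f _ => by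
        constructor
        · rintro ⟨h1, h2⟩; exact h2
        · intro h; exact ⟨(lt_asymm h), h⟩) fun _ _ => rfl
    · rw [Finset.filter_filter]
      exact Finset.sum_congr (Finset.filter_congr fun f _ => by
        constructor
        · rintro ⟨h1, h2⟩; exact le_antisymm (not_lt.1 h1) (not_lt.1 h2)
        · intro h; exact ⟨by rw [h]; exact lt_irrefl _, by rw [h]; exact lt_irrefl _⟩)
        fun _ _ => rfl
  calc ∑ k' ∈ Finset.range ((n'+1)+(m'+1)),
        ∑ f ∈ QS (n'+1) (m'+1) (k'+1), contractedBySurj br u f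
      = ∑ k' ∈ Finset.range ((n'+1)+(m'+1)),
        ((∑ f' ∈ QS n' (m'+1) k',
            appLetter (u (pA n' m')) (contractedBySurj br (u ∘ eB n' m') f')) +
         ((∑ f' ∈ QS (n'+1) m' k',
            appLetter (u (pB n' m')) (contractedBySurj br (u ∘ eA n' m') f')) +
          (∑ f' ∈ QS n' m' k',
            appGen (br (u (pA n' m')) (u (pB n' m')))
              (contractedBySurj br (u ∘ eC n' m') f')))) := by
        refine Finset.sum_congr rfl fun k' _ => ?_
        rw [hsplit k', bijA, bijB, bijC]
    _ = _ := by
        rw [Finset.sum_add_distrib, Finset.sum_add_distrib]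
        have e1 : ∑ k' ∈ Finset.range ((n'+1)+(m'+1)), ∑ f' ∈ QS n' (m'+1) k',
            appLetter (u (pA n' m')) (contractedBySurj br (u ∘ eB n' m') f') =
            appLetter (u (pA n' m')) (Rsum br n' (m'+1) (u ∘ eB n' m')) := by
          rw [← RsumB br (u ∘ eB n' m'), map_sum]
          exact Finset.sum_congr rfl fun k' _ => (map_sum _ _ _).symm
        have e2 : ∑ k' ∈ Finset.range ((n'+1)+(m'+1)), ∑ f' ∈ QS (n'+1) m' k',
            appLetter (u (pB n' m')) (contractedBySurj br (u ∘ eA n' m') f') =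
            appLetter (u (pB n' m')) (Rsum br (n'+1) m' (u ∘ eA n' m')) := by
          rw [← RsumA br (u ∘ eA n' m'), map_sum]
          exact Finset.sum_congr rfl fun k' _ => (map_sum _ _ _).symm
        have e3 : ∑ k' ∈ Finset.range ((n'+1)+(m'+1)), ∑ f' ∈ QS n' m' k',
            appGen (br (u (pA n' m')) (u (pB n' m')))
              (contractedBySurj br (u ∘ eC n' m') f') =
            appGen (br (u (pA n' m')) (u (pB n' m'))) (Rsum br n' m' (u ∘ eC n' m')) := by
          rw [← RsumC br (u ∘ eC n' m'), appGen_sum]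
          exact Finset.sum_congr rfl fun k' _ => (appGen_sum _ _ _).symm
        rw [e1, e2, e3]
        exact (add_assoc _ _ _).symm
end Assembly

section Main
variable {n' m' : ℕ}

lemma glue_eA {wa : Fin (n'+1) → A} {wb : Fin (m'+1) → A} :
    glue wa wb ∘ eA n' m' = glue wa (fun j : Fin m' => wb (Fin.castSucc j)) := by
  funext i
  show glue wa wb (eA n' m' i) = _
  by_cases h : i.val < n'+1
  · rw [glue, glue, dif_pos (show (eA n' m' i).val < n'+1 from h), dif_pos h]
    exact congrArg wa (Fin.ext rfl)
  · rw [glue, glue, dif_neg (show ¬ (eA n' m' i).val < n'+1 from h), dif_neg h]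
    exact congrArg wb (Fin.ext rfl)

lemma glue_eB {wa : Fin (n'+1) → A} {wb : Fin (m'+1) → A} :
    glue wa wb ∘ eB n' m' = glue (fun i : Fin n' => wa (Fin.castSucc i)) wb := by
  funext i
  show glue wa wb (eB n' m' i) = _
  by_cases h : i.val < n'
  · have hv : (eB n' m' i).val = i.val := by rw [eB_val, if_pos h]
    rw [glue, glue, dif_pos (show (eB n' m' i).val < n'+1 by omega), dif_pos h]
    exact congrArg wa (Fin.ext hv)
  · have hv : (eB n' m' i).val = i.val + 1 := by rw [eB_val, if_neg h]
    rw [glue, glue, dif_neg (show ¬ (eB n' m' i).val < n'+1 by omega), dif_neg h]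
    exact congrArg wb (Fin.ext (by show (eB n' m' i).val - (n'+1) = i.val - n'; omega))

lemma glue_eC {wa : Fin (n'+1) → A} {wb : Fin (m'+1) → A} :
    glue wa wb ∘ eC n' m' =
      glue (fun i : Fin n' => wa (Fin.castSucc i)) (fun j : Fin m' => wb (Fin.castSucc j)) := by
  funext i
  show glue wa wb (eC n' m' i) = _
  by_cases h : i.val < n'
  · have hv : (eC n' m' i).val = i.val := by rw [eC_val, if_pos h]
    rw [glue, glue, dif_pos (show (eC n' m' i).val < n'+1 by omega), dif_pos h]
    exact congrArg wa (Fin.ext hv)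
  · have hv : (eC n' m' i).val = i.val + 1 := by rw [eC_val, if_neg h]
    rw [glue, glue, dif_neg (show ¬ (eC n' m' i).val < n'+1 by omega), dif_neg h]
    exact congrArg wb (Fin.ext (by show (eC n' m' i).val - (n'+1) = i.val - n'; omega))

lemma glue_pA {wa : Fin (n'+1) → A} {wb : Fin (m'+1) → A} :
    glue wa wb (pA n' m') = wa (Fin.last n') := by
  rw [glue, dif_pos (show (pA n' m').val < n'+1 from Nat.lt_succ_self n')]
  exact congrArg wa (Fin.ext rfl)

lemma glue_pB {wa : Fin (n'+1) → A} {wb : Fin (m'+1) → A} :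
    glue wa wb (pB n' m') = wb (Fin.last m') := by
  rw [glue, dif_neg (show ¬ (pB n' m').val < n'+1 by show ¬ n'+m'+1 < n'+1; omega)]
  exact congrArg wb (Fin.ext (by show n'+m'+1 - (n'+1) = m'; omega))

lemma Rsum_left (m : ℕ) (u : Fin (0+m) → A) :
    Rsum br 0 m u = wordE (List.ofFn fun j : Fin m => u ⟨j.val, by omega⟩) := by
  rw [Rsum]
  rw [Finset.sum_eq_single_of_mem m (Finset.mem_range.2 (by omega))
    (fun k _ hk => by
      rw [show QS 0 m k = ∅ from QS_empty (by omega), Finset.sum_empty])]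
  rw [show QS 0 m m = _ from QS_full (Or.inl rfl) (by omega), Finset.sum_singleton]
  exact contracted_id br (by omega) u

lemma Rsum_right (n : ℕ) (u : Fin (n+0) → A) :
    Rsum br n 0 u = wordE (List.ofFn fun j : Fin n => u ⟨j.val, by omega⟩) := by
  rw [Rsum]
  rw [Finset.sum_eq_single_of_mem n (Finset.mem_range.2 (by omega))
    (fun k _ hk => by
      rw [show QS n 0 k = ∅ from QS_empty (by omega), Finset.sum_empty])]
  rw [show QS n 0 n = _ from QS_full (Or.inr rfl) (by omega), Finset.sum_singleton]
  exact contracted_id br (by omega) u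

lemma main_lemma (M : TA A →ₗ[ℝ] TA A →ₗ[ℝ] TA A) (hM : IsQuasiShuffle br M) :
    ∀ (N n m : ℕ), n + m ≤ N → ∀ (wa : Fin n → A) (wb : Fin m → A),
      M (wordE (List.ofFn wa)) (wordE (List.ofFn wb)) = Rsum br n m (glue wa wb) := by
  intro N
  induction N with
  | zero =>
    intro n m hN wa wb
    have hn : n = 0 := by omega
    have hm : m = 0 := by omega
    subst hn; subst hm
    rw [List.ofFn_zero, hM.1, List.ofFn_zero, Rsum_left]
    rw [List.ofFn_zero]
  | succ N ih =>
    intro n m hN wa wb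
    match n, m with
    | 0, m =>
      rw [List.ofFn_zero, hM.1, Rsum_left]
      refine congrArg wordE (congrArg List.ofFn (funext fun j => ?_))
      rw [glue, dif_neg (show ¬ (j.val < 0) by omega)]
      exact congrArg wb (Fin.ext rfl)
    | (n'+1), 0 =>
      rw [show (List.ofFn wb) = [] from List.ofFn_zero (f := wb), hM.2.1, Rsum_right]
      refine congrArg wordE (congrArg List.ofFn (funext fun j => ?_))
      rw [glue, dif_pos (show j.val < n'+1 from j.isLt)]
    | (n'+1), (m'+1) =>
      have hwa : List.ofFn wa = (List.ofFn fun i => wa (Fin.castSucc i)) ++ [wa (Fin.last n')] := by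
        rw [List.ofFn_succ', List.concat_eq_append]
      have hwb : List.ofFn wb = (List.ofFn fun j => wb (Fin.castSucc j)) ++ [wb (Fin.last m')] := by
        rw [List.ofFn_succ', List.concat_eq_append]
      rw [hwa, hwb, hM.2.2, ← hwa, ← hwb]
      rw [ih n' (m'+1) (by omega) (fun i => wa (Fin.castSucc i)) wb,
        ih (n'+1) m' (by omega) wa (fun j => wb (Fin.castSucc j)),
        ih n' m' (by omega) (fun i => wa (Fin.castSucc i)) (fun j => wb (Fin.castSucc j))]
      rw [Rstep br (glue wa wb), glue_eA, glue_eB, glue_eC, glue_pA, glue_pB]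
end Main

/-- the quasi-shuffle product of two non-empty words is the sum of
the contracted words over all surjections that are increasing on each block. -/
theorem quasiShuffle_surjection_formula {A : Type} [Fintype A]
    (br : A → A → (A →₀ ℝ))
    (hbr_comm : ∀ a b : A, br a b = br b a)
    (hbr_assoc : ∀ f g h : A →₀ ℝ, brExt br (brExt br f g) h = brExt br f (brExt br g h))
    (M : TA A →ₗ[ℝ] TA A →ₗ[ℝ] TA A)
    (hM : IsQuasiShuffle br M)
    (n m : ℕ) (hn : 0 < n) (hm : 0 < m)
    (wa : Fin n → A) (wb : Fin m → A) :
    M (wordE (List.ofFn wa)) (wordE (List.ofFn wb)) =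
      ∑ k ∈ Finset.Icc (max n m) (n + m),
        ∑ f ∈ (Finset.univ : Finset (Fin (n + m) → Fin k)).filter
            (fun f => Function.Surjective f ∧
              (∀ i j : Fin (n + m), i.val < j.val → j.val < n → f i < f j) ∧
              (∀ i j : Fin (n + m), i.val < j.val → n ≤ i.val → f i < f j)),
          contractedBySurj br
            (fun i : Fin (n + m) =>
              if h : i.val < n then wa ⟨i.val, h⟩
              else wb ⟨i.val - n, by omega⟩) f := by
  have h := main_lemma br M hM (n + m) n m le_rfl wa wb
  rw [h, Rsum]
  have hsub : Finset.Icc (max n m) (n + m) ⊆ Finset.range (n + m + 1) :=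
    fun k hk => Finset.mem_range.2 (by have := Finset.mem_Icc.1 hk; omega)
  rw [← Finset.sum_subset hsub (fun k hk hk2 => by
    rw [show QS n m k = ∅ from QS_empty (by
      have h1 := Finset.mem_range.1 hk
      have h2 : ¬ (max n m ≤ k ∧ k ≤ n + m) := by simpa [Finset.mem_Icc] using hk2
      omega), Finset.sum_empty])]
  rfl

end
end

section
/- Let γ ∈ (0,1), d ≥ 1, and let A_γ^d be the alphabet of tuples (i_1⋯i_n) with i_j ∈ {1,…,d} and 1 ≤ n ≤ ⌊1/γ⌋. Define the bracket polynomial ⟪i_1⋯i_n⟫ = •_{i_1}⋯•_{i_n} − Σ_{{a,b}} B^+_{(b_1⋯b_k)}(•_{a_1}⋯•_{a_{n-k}}), summing over splittings of {i_1,…,i_n} into two non-empty parts. Then in the Butcher–Connes–Kreimer Hopf algebra H(A_γ^d) one has Δ⟪i_1⋯i_n⟫ = ⟪i_1⋯i_n⟫ ⊗ 1 + 1 ⊗ ⟪i_1⋯i_n⟫ + Σ_{{a,b}} •_{a_1}⋯•_{a_{n-k}} ⊗ (⟪b_1⋯b_k⟫ − •_{(b_1⋯b_k)}). -/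
open scoped TensorProduct Classical

noncomputable section

/-- The sub-tuple of the list `l` indexed by a set of positions `S`
(taken in increasing order of positions). -/
def subL {d : ℕ} (l : List (Fin d)) (S : Finset (Fin l.length)) : List (Fin d) :=
  (S.sort (· ≤ ·)).map l.get

/-- The forest of single nodes `•_{i₁}⋯•_{iₙ}` with decorations from `l`. -/
def dotP {d : ℕ} {H : Type*} [CommRing H] [Algebra ℝ H]
    (B : List (Fin d) → H →ₗ[ℝ] H) (l : List (Fin d)) : H :=
  (l.map fun i => B [i] (1 : H)).prod

/-- The bracket polynomial
`⟪i₁⋯iₙ⟫ = •_{i₁}⋯•_{iₙ} − Σ_{{a,b}} B⁺_{(b)}(•_{a})`,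
the sum over all splittings of the indices into two non-empty parts. -/
def bpOf {d : ℕ} {H : Type*} [CommRing H] [Algebra ℝ H]
    (B : List (Fin d) → H →ₗ[ℝ] H) (l : List (Fin d)) : H :=
  dotP B l -
    ∑ S ∈ (Finset.univ : Finset (Finset (Fin l.length))).filter
        (fun S => S ≠ ∅ ∧ S ≠ Finset.univ),
      B (subL l S) (dotP B (subL l Sᶜ))

namespace BPAux

open Finset

variable {d : ℕ} {H : Type*} [CommRing H] [Algebra ℝ H]

lemma length_subL (l : List (Fin d)) (S : Finset (Fin l.length)) :
    (subL l S).length = S.card := by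
  simp [subL]

lemma dotP_subL (B : List (Fin d) → H →ₗ[ℝ] H) (l : List (Fin d))
    (S : Finset (Fin l.length)) :
    dotP B (subL l S) = ∏ i ∈ S, B [l.get i] 1 := by
  rw [dotP, subL, List.map_map, Finset.prod_eq_multiset_prod, ← Finset.sort_eq S (· ≤ ·),
    Multiset.map_coe, Multiset.prod_coe]
  rfl

lemma dotP_self (B : List (Fin d) → H →ₗ[ℝ] H) (l : List (Fin d)) :
    dotP B l = ∏ i : Fin l.length, B [l.get i] 1 := by
  rw [dotP, Fin.prod_univ_def]
  congr 1
  conv_lhs => rw [← List.map_get_finRange l]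
  rw [List.map_map]
  rfl

/-- The increasing enumeration of `S`, as a map from positions of `subL l S`. -/
def embS (l : List (Fin d)) (S : Finset (Fin l.length)) :
    Fin (subL l S).length → Fin l.length :=
  fun j => S.orderEmbOfFin (length_subL l S).symm j

lemma embS_injective (l : List (Fin d)) (S : Finset (Fin l.length)) :
    Function.Injective (embS l S) :=
  fun a b h => (S.orderEmbOfFin (length_subL l S).symm).injective h

lemma image_embS_univ (l : List (Fin d)) (S : Finset (Fin l.length)) :
    Finset.univ.image (embS l S) = S := by
  apply Finset.coe_injective
  rw [Finset.coe_image, Finset.coe_univ, Set.image_univ]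
  exact Finset.range_orderEmbOfFin S (length_subL l S).symm

lemma get_subL (l : List (Fin d)) (S : Finset (Fin l.length))
    (j : Fin (subL l S).length) :
    (subL l S).get j = l.get (embS l S j) := by
  simp only [List.get_eq_getElem]
  simp [subL, embS]
  rfl

lemma sort_image_embS (l : List (Fin d)) (S : Finset (Fin l.length))
    (T : Finset (Fin (subL l S).length)) :
    (T.image (embS l S)).sort (· ≤ ·) = (T.sort (· ≤ ·)).map (embS l S) := by
  rw [Finset.sort, Finset.sort,
    Finset.image_val_of_injOn ((embS_injective l S).injOn),
    ← Multiset.map_sort (embS l S) T.val (· ≤ ·) (· ≤ ·)]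
  intro a _ b _
  exact ((S.orderEmbOfFin (length_subL l S).symm).le_iff_le).symm

lemma subL_subL (l : List (Fin d)) (S : Finset (Fin l.length))
    (T : Finset (Fin (subL l S).length)) :
    subL (subL l S) T = subL l (T.image (embS l S)) := by
  show (T.sort (· ≤ ·)).map (subL l S).get
      = ((T.image (embS l S)).sort (· ≤ ·)).map l.get
  rw [sort_image_embS, List.map_map]
  exact List.map_congr_left fun j _ => get_subL l S j

lemma image_embS_compl (l : List (Fin d)) (S : Finset (Fin l.length))
    (T : Finset (Fin (subL l S).length)) :
    Tᶜ.image (embS l S) = S \ T.image (embS l S) := by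
  rw [Finset.compl_eq_univ_sdiff, Finset.image_sdiff _ _ (embS_injective l S),
    image_embS_univ]

/-- The bracket polynomial of a subtuple, re-expressed through subsets of the
ambient index set. -/
lemma bp_subL (B : List (Fin d) → H →ₗ[ℝ] H) (l : List (Fin d))
    (S : Finset (Fin l.length)) :
    bpOf B (subL l S) = (∏ i ∈ S, B [l.get i] 1) -
      ∑ V ∈ Finset.univ.filter
          (fun V : Finset (Fin l.length) => V ⊆ S ∧ V ≠ ∅ ∧ V ≠ S),
        B (subL l V) (∏ i ∈ S \ V, B [l.get i] 1) := by
  rw [bpOf, dotP_subL]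
  congr 1
  refine Finset.sum_nbij' (i := fun T => T.image (embS l S))
    (j := fun V => Finset.univ.filter (fun k => embS l S k ∈ V)) ?_ ?_ ?_ ?_ ?_
  · intro T hT
    simp only [Finset.mem_filter, Finset.mem_univ, true_and] at hT ⊢
    refine ⟨?_, ?_, ?_⟩
    · intro x hx
      rcases Finset.mem_image.1 hx with ⟨k, _, rfl⟩
      exact Finset.orderEmbOfFin_mem S (length_subL l S).symm k
    · intro h
      exact hT.1 (by simpa using (Finset.image_eq_empty).1 h)
    · intro h
      apply hT.2
      have : T.image (embS l S) = Finset.univ.image (embS l S) := by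
        rw [h, image_embS_univ]
      exact Finset.image_injective (embS_injective l S) this
  · intro V hV
    simp only [Finset.mem_filter, Finset.mem_univ, true_and] at hV ⊢
    obtain ⟨hVS, hV0, hVS'⟩ := hV
    have himg : (Finset.univ.filter (fun k => embS l S k ∈ V)).image (embS l S) = V := by
      ext x
      simp only [Finset.mem_image, Finset.mem_filter, Finset.mem_univ, true_and]
      constructor
      · rintro ⟨k, hk, rfl⟩; exact hk
      · intro hx
        have hxS : x ∈ S := hVS hx
        have : x ∈ Finset.univ.image (embS l S) := by rw [image_embS_univ]; exact hxS
        rcases Finset.mem_image.1 this with ⟨k, _, rfl⟩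
        exact ⟨k, hx, rfl⟩
    constructor
    · intro h
      apply hV0; rw [← himg, h, Finset.image_empty]
    · intro h
      apply hVS'; rw [← himg, h, image_embS_univ]
  · intro T hT
    ext k
    simp only [Finset.mem_filter, Finset.mem_univ, true_and, Finset.mem_image]
    constructor
    · rintro ⟨k', hk', hkk'⟩
      rwa [← embS_injective l S hkk']
    · intro hk; exact ⟨k, hk, rfl⟩
  · intro V hV
    simp only [Finset.mem_filter, Finset.mem_univ, true_and] at hV
    obtain ⟨hVS, _, _⟩ := hV
    ext x
    simp only [Finset.mem_image, Finset.mem_filter, Finset.mem_univ, true_and]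
    constructor
    · rintro ⟨k, hk, rfl⟩; exact hk
    · intro hx
      have hxS : x ∈ S := hVS hx
      have : x ∈ Finset.univ.image (embS l S) := by rw [image_embS_univ]; exact hxS
      rcases Finset.mem_image.1 this with ⟨k, _, rfl⟩
      exact ⟨k, hx, rfl⟩
  · intro T hT
    rw [subL_subL, subL_subL, image_embS_compl, dotP_subL]

/-- Splitting off the two trivial subsets from a sum over a powerset. -/
lemma sum_powerset_split {α : Type*} [Fintype α] [DecidableEq α] {M : Type*} [AddCommMonoid M]
    (s : Finset α) (hs : s ≠ ∅) (f : Finset α → M) :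
    ∑ U ∈ s.powerset, f U
      = f ∅ + f s +
        ∑ U ∈ Finset.univ.filter (fun U : Finset α => U ⊆ s ∧ U ≠ ∅ ∧ U ≠ s), f U := by
  have hfilter : Finset.univ.filter (fun U : Finset α => U ⊆ s ∧ U ≠ ∅ ∧ U ≠ s)
      = s.powerset.filter (fun U => U ≠ ∅ ∧ U ≠ s) := by
    ext U
    simp [Finset.mem_powerset, and_assoc]
  have hnot : s.powerset.filter (fun U => ¬(U ≠ ∅ ∧ U ≠ s)) = {∅, s} := by
    ext U
    simp only [Finset.mem_filter, Finset.mem_powerset, Finset.mem_insert, Finset.mem_singleton,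
      not_and_or, not_not]
    constructor
    · rintro ⟨_, h | h⟩
      · exact Or.inl h
      · exact Or.inr h
    · rintro (rfl | rfl)
      · exact ⟨Finset.empty_subset s, Or.inl rfl⟩
      · exact ⟨subset_rfl, Or.inr rfl⟩
  rw [hfilter, ← Finset.sum_filter_add_sum_filter_not s.powerset (fun U => U ≠ ∅ ∧ U ≠ s) f,
    hnot, Finset.sum_pair (Ne.symm hs)]
  abel

/-- Splitting off the two trivial subsets from a sum over all subsets. -/
lemma sum_univ_split {α : Type*} [Fintype α] [DecidableEq α] [Nonempty α] {M : Type*} [AddCommMonoid M]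
    (f : Finset α → M) :
    ∑ U : Finset α, f U
      = f ∅ + f Finset.univ +
        ∑ U ∈ Finset.univ.filter
          (fun U : Finset α => U ≠ ∅ ∧ U ≠ Finset.univ), f U := by
  have h := sum_powerset_split (Finset.univ : Finset α) Finset.univ_nonempty.ne_empty f
  rw [Finset.powerset_univ] at h
  rw [h]
  congr 2
  ext U
  simp

/-- The key reindexing of pairs of disjoint sets. -/
lemma double_sum_swap {α : Type*} [Fintype α] [DecidableEq α] {M : Type*} [AddCommMonoid M]
    (G : Finset α → Finset α → M) :
    ∑ S ∈ Finset.univ.filter (fun S : Finset α => S ≠ ∅ ∧ S ≠ Finset.univ),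
      ∑ U ∈ Finset.univ.filter (fun U : Finset α => U ⊆ Sᶜ ∧ U ≠ ∅ ∧ U ≠ Sᶜ), G S U
    = ∑ S ∈ Finset.univ.filter (fun S : Finset α => S ≠ ∅ ∧ S ≠ Finset.univ),
      ∑ V ∈ Finset.univ.filter (fun V : Finset α => V ⊆ S ∧ V ≠ ∅ ∧ V ≠ S), G V (S \ V) := by
  rw [Finset.sum_sigma', Finset.sum_sigma']
  refine Finset.sum_nbij' (i := fun p => ⟨p.1 ∪ p.2, p.1⟩) (j := fun q => ⟨q.2, q.1 \ q.2⟩)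
    ?_ ?_ ?_ ?_ ?_
  · rintro ⟨S, U⟩ hp
    simp only [Finset.mem_sigma, Finset.mem_filter, Finset.mem_univ, true_and] at hp ⊢
    obtain ⟨⟨hS0, hSu⟩, hUc, hU0, hUc'⟩ := hp
    have hdisj : Disjoint S U := fun t htS htU x hx =>
      absurd (htS hx) (Finset.mem_compl.1 (hUc (htU hx)))
    refine ⟨⟨?_, ?_⟩, Finset.subset_union_left, hS0, ?_⟩
    · intro h
      exact hS0 (Finset.union_eq_empty.1 h).1
    · intro h
      apply hUc'
      apply subset_antisymm hUc
      intro x hx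
      have hxu : x ∈ S ∪ U := h ▸ Finset.mem_univ x
      rcases Finset.mem_union.1 hxu with h' | h'
      · exact absurd h' (Finset.mem_compl.1 hx)
      · exact h'
    · intro h
      apply hU0
      have : U ⊆ S := h ▸ Finset.subset_union_right
      rw [← Finset.subset_empty]
      intro x hx
      exact absurd (this hx) (Finset.mem_compl.1 (hUc hx))
  · rintro ⟨S', V⟩ hq
    simp only [Finset.mem_sigma, Finset.mem_filter, Finset.mem_univ, true_and] at hq ⊢
    obtain ⟨⟨hS0, hSu⟩, hVS, hV0, hVS'⟩ := hq
    refine ⟨⟨hV0, ?_⟩, ?_, ?_, ?_⟩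
    · intro h
      exact hSu (Finset.univ_subset_iff.1 (h ▸ hVS))
    · intro x hx
      exact Finset.mem_compl.2 (Finset.mem_sdiff.1 hx).2
    · intro h
      exact hVS' (subset_antisymm hVS (Finset.sdiff_eq_empty_iff_subset.1 h))
    · intro h
      apply hSu
      have : V ∪ (S' \ V) = V ∪ Vᶜ := by rw [h]
      rw [Finset.union_sdiff_of_subset hVS, Finset.union_compl] at this
      exact this
  · rintro ⟨S, U⟩ hp
    simp only [Finset.mem_sigma, Finset.mem_filter, Finset.mem_univ, true_and] at hp
    obtain ⟨⟨hS0, hSu⟩, hUc, hU0, hUc'⟩ := hp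
    have hdisj : Disjoint S U := Finset.disjoint_left.2 fun {x} hxS hxU =>
      (Finset.mem_compl.1 (hUc hxU)) hxS
    simp only
    rw [Finset.union_sdiff_cancel_left hdisj]
  · rintro ⟨S', V⟩ hq
    simp only [Finset.mem_sigma, Finset.mem_filter, Finset.mem_univ, true_and] at hq
    obtain ⟨_, hVS, _, _⟩ := hq
    simp only
    congr 1
    exact Finset.union_sdiff_of_subset hVS
  · rintro ⟨S, U⟩ hp
    simp only [Finset.mem_sigma, Finset.mem_filter, Finset.mem_univ, true_and] at hp
    obtain ⟨⟨hS0, hSu⟩, hUc, hU0, hUc'⟩ := hp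
    have hdisj : Disjoint S U := Finset.disjoint_left.2 fun {x} hxS hxU =>
      (Finset.mem_compl.1 (hUc hxU)) hxS
    simp only
    rw [Finset.union_sdiff_cancel_left hdisj]

lemma delta_dot (Δ : H →ₐ[ℝ] H ⊗[ℝ] H) (B : List (Fin d) → H →ₗ[ℝ] H)
    (hΔB : ∀ (a : List (Fin d)) (σ : H),
      Δ (B a σ) = B a σ ⊗ₜ[ℝ] 1 + LinearMap.lTensor H (B a) (Δ σ))
    (a : List (Fin d)) :
    Δ (B a 1) = B a 1 ⊗ₜ[ℝ] 1 + 1 ⊗ₜ[ℝ] B a 1 := by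
  rw [hΔB a 1, map_one Δ, Algebra.TensorProduct.one_def, LinearMap.lTensor_tmul]

lemma prod_one_tmul {ι : Type*} (t : Finset ι) (f : ι → H) :
    (∏ i ∈ t, ((1 : H) ⊗ₜ[ℝ] f i) : H ⊗[ℝ] H) = (1 : H) ⊗ₜ[ℝ] ∏ i ∈ t, f i := by
  have h := map_prod
    (Algebra.TensorProduct.includeRight (R := ℝ) (A := H) (B := H)) f t
  simp only [Algebra.TensorProduct.includeRight_apply] at h
  exact h.symm

lemma prod_tmul_one {ι : Type*} (t : Finset ι) (f : ι → H) :
    (∏ i ∈ t, (f i ⊗ₜ[ℝ] (1 : H)) : H ⊗[ℝ] H) = (∏ i ∈ t, f i) ⊗ₜ[ℝ] (1 : H) := by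
  have h := map_prod
    (Algebra.TensorProduct.includeLeft (R := ℝ) (S := ℝ) (A := H) (B := H)) f t
  simp only [Algebra.TensorProduct.includeLeft_apply] at h
  exact h.symm

lemma delta_P (Δ : H →ₐ[ℝ] H ⊗[ℝ] H) (B : List (Fin d) → H →ₗ[ℝ] H)
    (hΔB : ∀ (a : List (Fin d)) (σ : H),
      Δ (B a σ) = B a σ ⊗ₜ[ℝ] 1 + LinearMap.lTensor H (B a) (Δ σ))
    (l : List (Fin d)) (s : Finset (Fin l.length)) :
    Δ (∏ i ∈ s, B [l.get i] 1)
      = ∑ U ∈ s.powerset,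
          (∏ i ∈ s \ U, B [l.get i] 1) ⊗ₜ[ℝ] (∏ i ∈ U, B [l.get i] 1) := by
  rw [map_prod]
  have h1 : ∀ i ∈ s, Δ (B [l.get i] 1)
      = ((1 : H) ⊗ₜ[ℝ] (B [l.get i] (1 : H))) + ((B [l.get i] (1 : H)) ⊗ₜ[ℝ] (1 : H)) := by
    intro i _
    rw [delta_dot Δ B hΔB]
    exact add_comm _ _
  rw [Finset.prod_congr rfl h1, Finset.prod_add]
  refine Finset.sum_congr rfl fun U hU => ?_
  rw [prod_one_tmul, prod_tmul_one, Algebra.TensorProduct.tmul_mul_tmul, one_mul, mul_one]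

end BPAux

set_option maxHeartbeats 1600000 in
/-- coproduct of the bracket polynomial in the BCK Hopf algebra over
the alphabet `A_γ^d` of tuples of length `≤ N_γ` (formalized through the defining
structure: `Δ` a multiplicative coproduct satisfying the grafting recursion for the
operators `B⁺_a`). -/
theorem coproduct_of_bracket_polynomial {d : ℕ} {H : Type*}
    [CommRing H] [Algebra ℝ H]
    (γ : ℝ) (hγ0 : 0 < γ) (hγ1 : γ < 1)
    (Δ : H →ₐ[ℝ] H ⊗[ℝ] H)
    (B : List (Fin d) → H →ₗ[ℝ] H)
    (hΔB : ∀ (a : List (Fin d)) (σ : H),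
      Δ (B a σ) = B a σ ⊗ₜ[ℝ] 1 + LinearMap.lTensor H (B a) (Δ σ))
    (l : List (Fin d)) (hl : l ≠ []) (hlen : l.length ≤ Nat.floor γ⁻¹) :
    Δ (bpOf B l) =
      bpOf B l ⊗ₜ[ℝ] 1 + 1 ⊗ₜ[ℝ] bpOf B l +
      ∑ S ∈ (Finset.univ : Finset (Finset (Fin l.length))).filter
          (fun S => S ≠ ∅ ∧ S ≠ Finset.univ),
        dotP B (subL l Sᶜ) ⊗ₜ[ℝ] (bpOf B (subL l S) - B (subL l S) 1) := by
  classical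
  have hlen0 : 0 < l.length := List.length_pos_iff.2 hl
  haveI : Nonempty (Fin l.length) := ⟨⟨0, hlen0⟩⟩
  have hbp : bpOf B l = (∏ i, B [l.get i] 1)
      - ∑ S ∈ (Finset.univ : Finset (Finset (Fin l.length))).filter
          (fun S => S ≠ ∅ ∧ S ≠ Finset.univ),
          B (subL l S) (∏ i ∈ Sᶜ, B [l.get i] 1) := by
    rw [bpOf, BPAux.dotP_self]
    congr 1
    exact Finset.sum_congr rfl fun S _ => by rw [BPAux.dotP_subL]
  have hΔP : ∀ s : Finset (Fin l.length), Δ (∏ i ∈ s, B [l.get i] 1)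
      = ∑ U ∈ s.powerset,
          (∏ i ∈ s \ U, B [l.get i] 1) ⊗ₜ[ℝ] (∏ i ∈ U, B [l.get i] 1) :=
    fun s => BPAux.delta_P Δ B hΔB l s
  have hΔtop : Δ (∏ i, B [l.get i] 1)
      = (∏ i, B [l.get i] 1) ⊗ₜ[ℝ] 1 + 1 ⊗ₜ[ℝ] (∏ i, B [l.get i] 1)
        + ∑ S ∈ (Finset.univ : Finset (Finset (Fin l.length))).filter
            (fun S => S ≠ ∅ ∧ S ≠ Finset.univ),
            (∏ i ∈ Sᶜ, B [l.get i] 1) ⊗ₜ[ℝ] (∏ i ∈ S, B [l.get i] 1) := by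
    rw [hΔP Finset.univ, Finset.powerset_univ, BPAux.sum_univ_split]
    simp only [Finset.sdiff_empty, Finset.prod_empty, Finset.sdiff_self,
      ← Finset.compl_eq_univ_sdiff, Finset.compl_empty, Finset.compl_univ]
  have hΔgraft : ∀ S ∈ (Finset.univ : Finset (Finset (Fin l.length))).filter
      (fun S => S ≠ ∅ ∧ S ≠ Finset.univ),
      Δ (B (subL l S) (∏ i ∈ Sᶜ, B [l.get i] 1)) =
        B (subL l S) (∏ i ∈ Sᶜ, B [l.get i] 1) ⊗ₜ[ℝ] 1
        + ((∏ i ∈ Sᶜ, B [l.get i] 1) ⊗ₜ[ℝ] B (subL l S) 1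
           + 1 ⊗ₜ[ℝ] B (subL l S) (∏ i ∈ Sᶜ, B [l.get i] 1)
           + ∑ U ∈ Finset.univ.filter
               (fun U : Finset (Fin l.length) => U ⊆ Sᶜ ∧ U ≠ ∅ ∧ U ≠ Sᶜ),
               (∏ i ∈ Sᶜ \ U, B [l.get i] 1) ⊗ₜ[ℝ]
                 B (subL l S) (∏ i ∈ U, B [l.get i] 1)) := by
    intro S hS
    simp only [Finset.mem_filter, Finset.mem_univ, true_and] at hS
    have hSc : Sᶜ ≠ ∅ := by
      intro h
      exact hS.2 (by rwa [Finset.compl_eq_empty_iff] at h)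
    rw [hΔB, hΔP Sᶜ, map_sum]
    congr 1
    simp only [LinearMap.lTensor_tmul]
    rw [BPAux.sum_powerset_split Sᶜ hSc
      (fun U => (∏ i ∈ Sᶜ \ U, B [l.get i] 1) ⊗ₜ[ℝ]
        B (subL l S) (∏ i ∈ U, B [l.get i] 1))]
    simp only [Finset.sdiff_empty, Finset.prod_empty, Finset.sdiff_self,
      map_one]
  have key : ∑ S ∈ (Finset.univ : Finset (Finset (Fin l.length))).filter
        (fun S => S ≠ ∅ ∧ S ≠ Finset.univ),
        ∑ U ∈ Finset.univ.filter
          (fun U : Finset (Fin l.length) => U ⊆ Sᶜ ∧ U ≠ ∅ ∧ U ≠ Sᶜ),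
          (∏ i ∈ Sᶜ \ U, B [l.get i] 1) ⊗ₜ[ℝ] B (subL l S) (∏ i ∈ U, B [l.get i] 1)
      = ∑ S ∈ (Finset.univ : Finset (Finset (Fin l.length))).filter
        (fun S => S ≠ ∅ ∧ S ≠ Finset.univ),
        ∑ V ∈ Finset.univ.filter
          (fun V : Finset (Fin l.length) => V ⊆ S ∧ V ≠ ∅ ∧ V ≠ S),
          (∏ i ∈ Sᶜ, B [l.get i] 1) ⊗ₜ[ℝ] B (subL l V) (∏ i ∈ S \ V, B [l.get i] 1) := by
    have h1 : ∀ S : Finset (Fin l.length), ∀ U : Finset (Fin l.length),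
        Sᶜ \ U = (S ∪ U)ᶜ := by
      intro S U
      ext x
      simp only [Finset.mem_sdiff, Finset.mem_compl, Finset.mem_union, not_or]
    calc
      _ = ∑ S ∈ (Finset.univ : Finset (Finset (Fin l.length))).filter
            (fun S => S ≠ ∅ ∧ S ≠ Finset.univ),
            ∑ U ∈ Finset.univ.filter
              (fun U : Finset (Fin l.length) => U ⊆ Sᶜ ∧ U ≠ ∅ ∧ U ≠ Sᶜ),
              (∏ i ∈ (S ∪ U)ᶜ, B [l.get i] 1) ⊗ₜ[ℝ]
                B (subL l S) (∏ i ∈ U, B [l.get i] 1) := by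
        refine Finset.sum_congr rfl fun S _ => Finset.sum_congr rfl fun U _ => ?_
        rw [h1]
      _ = ∑ S ∈ (Finset.univ : Finset (Finset (Fin l.length))).filter
            (fun S => S ≠ ∅ ∧ S ≠ Finset.univ),
            ∑ V ∈ Finset.univ.filter
              (fun V : Finset (Fin l.length) => V ⊆ S ∧ V ≠ ∅ ∧ V ≠ S),
              (∏ i ∈ (V ∪ (S \ V))ᶜ, B [l.get i] 1) ⊗ₜ[ℝ]
                B (subL l V) (∏ i ∈ S \ V, B [l.get i] 1) :=
        BPAux.double_sum_swap
          (fun S U => (∏ i ∈ (S ∪ U)ᶜ, B [l.get i] 1) ⊗ₜ[ℝ]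
            B (subL l S) (∏ i ∈ U, B [l.get i] 1))
      _ = _ := by
        refine Finset.sum_congr rfl fun S _ => Finset.sum_congr rfl fun V hV => ?_
        simp only [Finset.mem_filter, Finset.mem_univ, true_and] at hV
        rw [Finset.union_sdiff_of_subset hV.1]
  rw [hbp, map_sub, map_sum, hΔtop, Finset.sum_congr rfl hΔgraft]
  simp only [BPAux.bp_subL B l, BPAux.dotP_subL B l]
  simp only [TensorProduct.sub_tmul, TensorProduct.tmul_sub, TensorProduct.tmul_sum,
    TensorProduct.sum_tmul, Finset.sum_add_distrib, Finset.sum_sub_distrib]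
  rw [key]
  abel

end
end

section
/- The bracket polynomial ⟪i_1⋯i_n⟫ equals •_{i_1}⋯•_{i_n} − B^+(Δ'(•_{i_1}⋯•_{i_n})), where Δ' is the reduced BCK coproduct and B^+ : H({1,…,d}) ⊗ H({1,…,d}) → H(A_γ^d) is the linear map sending σ ⊗ •_{i_1}⋯•_{i_n} to B^+_{(i_1⋯i_n)}(σ) and vanishing on σ ⊗ τ whenever τ is not a forest of single nodes. -/
open scoped TensorProduct Classical

noncomputable section

/-- the bracket polynomial equals
`•_{i₁}⋯•_{iₙ} − B⁺(Δ'(•_{i₁}⋯•_{iₙ}))`, where `Δ'` is the reduced coproduct and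
`B⁺` is the linear map sending `σ ⊗ •_{b₁}⋯•_{b_k}` to `B⁺_{(b₁⋯b_k)}(σ)`. -/
theorem bracket_polynomial_via_reduced_coproduct {d : ℕ} {H : Type*}
    [CommRing H] [Algebra ℝ H]
    (γ : ℝ) (hγ0 : 0 < γ) (hγ1 : γ < 1)
    (Δ : H →ₐ[ℝ] H ⊗[ℝ] H)
    (B : List (Fin d) → H →ₗ[ℝ] H)
    (hΔB : ∀ (a : List (Fin d)) (σ : H),
      Δ (B a σ) = B a σ ⊗ₜ[ℝ] 1 + LinearMap.lTensor H (B a) (Δ σ))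
    (Bb : H ⊗[ℝ] H →ₗ[ℝ] H)
    (hBb : ∀ (σ : H) (t : List (Fin d)), t ≠ [] →
      Bb (σ ⊗ₜ[ℝ] dotP B t) = B t σ)
    (l : List (Fin d)) (hl : l ≠ []) (hlen : l.length ≤ Nat.floor γ⁻¹) :
    bpOf B l =
      dotP B l -
        Bb (Δ (dotP B l) - dotP B l ⊗ₜ[ℝ] 1 - 1 ⊗ₜ[ℝ] dotP B l) := by
  classical
  set x : Fin l.length → H := fun i => B [l.get i] (1 : H) with hx
  -- products over subsets
  have hdotS : ∀ S : Finset (Fin l.length), dotP B (subL l S) = ∏ i ∈ S, x i := by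
    intro S
    unfold dotP subL
    rw [List.map_map, Finset.prod, ← Finset.sort_eq (r := (· ≤ ·)) (s := S), Multiset.map_coe,
      Multiset.prod_coe]
    rfl
  have hdot : dotP B l = ∏ i, x i := by
    unfold dotP
    conv_lhs => rw [← List.ofFn_get l, List.map_ofFn, List.prod_ofFn]
    rfl
  -- nonemptiness of sublists
  have hsubne : ∀ S : Finset (Fin l.length), S ≠ ∅ → subL l S ≠ [] := by
    intro S hS h
    apply hS
    have := congrArg List.length h
    simp only [subL, List.length_map, Finset.length_sort, List.length_nil] at this
    exact Finset.card_eq_zero.mp this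
  -- each dot is primitive
  have hΔx : ∀ i, Δ (x i) = x i ⊗ₜ[ℝ] 1 + 1 ⊗ₜ[ℝ] x i := by
    intro i
    show Δ (B [l.get i] 1) = _
    rw [hΔB]
    have h1 : Δ (1 : H) = (1 : H) ⊗ₜ[ℝ] (1 : H) := by
      rw [map_one]; rfl
    rw [h1, LinearMap.lTensor_tmul]
  -- coproduct of the dot product
  have hΔprod : Δ (dotP B l)
      = ∑ S : Finset (Fin l.length), (∏ i ∈ S, x i) ⊗ₜ[ℝ] (∏ i ∈ Sᶜ, x i) := by
    rw [hdot, map_prod]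
    calc ∏ i, Δ (x i) = ∏ i, (x i ⊗ₜ[ℝ] (1 : H) + (1 : H) ⊗ₜ[ℝ] x i) :=
          Finset.prod_congr rfl fun i _ => hΔx i
      _ = ∑ S ∈ (Finset.univ : Finset (Fin l.length)).powerset,
            (∏ i ∈ S, x i ⊗ₜ[ℝ] (1 : H)) * ∏ i ∈ Finset.univ \ S, (1 : H) ⊗ₜ[ℝ] x i :=
          Finset.prod_add _ _ _
      _ = ∑ S : Finset (Fin l.length), (∏ i ∈ S, x i) ⊗ₜ[ℝ] (∏ i ∈ Sᶜ, x i) := by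
          rw [Finset.powerset_univ]
          refine Finset.sum_congr rfl fun S _ => ?_
          rw [← Finset.compl_eq_univ_sdiff]
          have h1 : (∏ i ∈ S, x i ⊗ₜ[ℝ] (1 : H)) = (∏ i ∈ S, x i) ⊗ₜ[ℝ] (1 : H) := by
            simp only [← Algebra.TensorProduct.includeLeft_apply (S := ℝ) (R := ℝ) (B := H)]
            exact (map_prod _ _ _).symm
          have h2 : (∏ i ∈ Sᶜ, (1 : H) ⊗ₜ[ℝ] x i) = (1 : H) ⊗ₜ[ℝ] (∏ i ∈ Sᶜ, x i) := by
            simp only [← Algebra.TensorProduct.includeRight_apply (R := ℝ) (A := H)]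
            exact (map_prod _ _ _).symm
          rw [h1, h2, Algebra.TensorProduct.tmul_mul_tmul, one_mul, mul_one]
  have hne : (∅ : Finset (Fin l.length)) ≠ Finset.univ := by
    have hpos : 0 < l.length := List.length_pos_iff.mpr hl
    have hnonem : (Finset.univ : Finset (Fin l.length)).Nonempty :=
      ⟨⟨0, hpos⟩, Finset.mem_univ _⟩
    exact fun h => by simp [← h] at hnonem
  -- split the sum
  set P : Finset (Fin l.length) → Prop := fun S => S ≠ ∅ ∧ S ≠ Finset.univ with hP
  have hsplit : Δ (dotP B l) - dotP B l ⊗ₜ[ℝ] 1 - 1 ⊗ₜ[ℝ] dotP B l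
      = ∑ S ∈ Finset.univ.filter P, (∏ i ∈ S, x i) ⊗ₜ[ℝ] (∏ i ∈ Sᶜ, x i) := by
    rw [hΔprod]
    have hfilter : (Finset.univ.filter fun S => ¬ P S)
        = ({∅, Finset.univ} : Finset (Finset (Fin l.length))) := by
      ext S
      simp only [hP, Finset.mem_filter, Finset.mem_univ, true_and, not_and_or, not_ne_iff,
        Finset.mem_insert, Finset.mem_singleton]
    have hsum := Finset.sum_filter_add_sum_filter_not Finset.univ P
      (fun S => (∏ i ∈ S, x i) ⊗ₜ[ℝ] (∏ i ∈ Sᶜ, x i))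
    rw [hfilter, Finset.sum_pair hne] at hsum
    rw [← hsum]
    simp [hdot]
    abel
  rw [hsplit, map_sum]
  unfold bpOf
  congr 1
  refine Finset.sum_nbij' (i := compl) (j := compl) ?_ ?_ ?_ ?_ ?_
  · intro S hS
    simp only [hP, Finset.mem_filter, Finset.mem_univ, true_and] at hS ⊢
    exact ⟨fun h => hS.2 (by simpa using congrArg compl h),
      fun h => hS.1 (by simpa using congrArg compl h)⟩
  · intro S hS
    simp only [hP, Finset.mem_filter, Finset.mem_univ, true_and] at hS ⊢
    exact ⟨fun h => hS.2 (by simpa using congrArg compl h),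
      fun h => hS.1 (by simpa using congrArg compl h)⟩
  · intro S _; exact compl_compl S
  · intro S _; exact compl_compl S
  · intro S hS
    simp only [hP, Finset.mem_filter, Finset.mem_univ, true_and] at hS
    rw [compl_compl, ← hdotS S, ← hdotS Sᶜ, hBb _ _ (hsubne S hS.1)]

end
end
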